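/- arXiv:1203.1203 — 6 statements merged into one kernel-verified Lean document; each statement's English description precedes it below -/
import Mathlib

section
/- Let w be a word over the two-letter alphabet {a,b}. The following conditions are equivalent: (1) w is trapezoidal; (2) |w| = L_w + H_w; (3) |w| = R_w + K_w; (4) for every n ≥ 0, w has at most one left special factor of length n; (5) for every n ≥ 0, w has at most one right special factor of length n; (6) for every n ≥ 0, |f_w(n+1) − f_w(n)| ≤ 1, where f_w(n) denotes the number of distinct factors of w of length n. -/
open List

/-- Words over the two-letter alphabet {a,b}, encoded as lists of booleans
(`false` = a, `true` = b). -/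
abbrev Word := List Bool

/-- The set of factors of `w` of length `n`. -/
def factorSet (w : Word) (n : ℕ) : Set Word :=
  {u | u.length = n ∧ u <:+: w}

/-- `w` is trapezoidal if it has at most `n+1` distinct factors of length `n`, for all `n`. -/
def Trapezoidal (w : Word) : Prop :=
  ∀ n : ℕ, (factorSet w n).ncard ≤ n + 1

/-- `u` is a right special factor of `w`. -/
def RightSpecial (w u : Word) : Prop :=
  (u ++ [false]) <:+: w ∧ (u ++ [true]) <:+: w

/-- `u` is a left special factor of `w`. -/
def LeftSpecial (w u : Word) : Prop :=
  (false :: u) <:+: w ∧ (true :: u) <:+: w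

/-- The number of occurrences of `u` as a factor of `w` (counted by starting position). -/
noncomputable def occ (u w : Word) : ℕ :=
  {i : ℕ | i + u.length ≤ w.length ∧ (w.drop i).take u.length = u}.ncard

/-- `H_w`: the minimal length of a prefix of `w` occurring exactly once in `w`. -/
noncomputable def Hp (w : Word) : ℕ := sInf {n | n ≤ w.length ∧ occ (w.take n) w = 1}

/-- `K_w`: the minimal length of a suffix of `w` occurring exactly once in `w`. -/
noncomputable def Kp (w : Word) : ℕ := sInf {n | n ≤ w.length ∧ occ (w.drop (w.length - n)) w = 1}

/-- `R_w`: the minimal `n` such that `w` has no right special factor of length `n`. -/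
noncomputable def Rp (w : Word) : ℕ := sInf {n | ∀ u : Word, u.length = n → ¬ RightSpecial w u}

/-- `L_w`: the minimal `n` such that `w` has no left special factor of length `n`. -/
noncomputable def Lp (w : Word) : ℕ := sInf {n | ∀ u : Word, u.length = n → ¬ LeftSpecial w u}

/-- A word is closed if it is empty or has a factor, different from the word itself,
occurring exactly twice, as a prefix and as a suffix. -/
def ClosedWord (w : Word) : Prop :=
  w = [] ∨ ∃ u : Word, u ≠ w ∧ u <+: w ∧ u <:+ w ∧ occ u w = 2

/-- A binary word is balanced if any two factors of the same length have the same number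
of occurrences of each letter, up to one. -/
def BalancedWord (w : Word) : Prop :=
  ∀ u v : Word, u <:+: w → v <:+: w → u.length = v.length →
    ∀ c : Bool, ((u.count c : ℤ) - (v.count c : ℤ)).natAbs ≤ 1

/-- `(f,g)` is a pathological pair of `w`. -/
def PathPair (w f g : Word) : Prop :=
  f <:+: w ∧ g <:+: w ∧ f.length = g.length ∧
    2 ≤ ((f.count false : ℤ) - (g.count false : ℤ)).natAbs

/-- `p` is a period of `u`: `1 ≤ p ≤ |u|` and `u_i = u_{i+p}` whenever both sides are defined. -/
def HasPeriod (u : Word) (p : ℕ) : Prop :=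
  1 ≤ p ∧ p ≤ u.length ∧ ∀ i : ℕ, i + p < u.length → u[i]? = u[i + p]?

/-- A word is central if it is empty or has two coprime periods `p`, `q`
with length `p + q - 2`. -/
def Central (u : Word) : Prop :=
  u = [] ∨ ∃ p q : ℕ, Nat.Coprime p q ∧ _root_.HasPeriod u p ∧ _root_.HasPeriod u q ∧ u.length + 2 = p + q

/-! ### Auxiliary development for the proof -/

section Aux

variable {w u v p q x y : Word} {n m i j : ℕ} {c : Bool}

/-- The set of occurrence positions of `u` in `w`. -/
def occSet (u w : Word) : Set ℕ :=
  {i : ℕ | i + u.length ≤ w.length ∧ (w.drop i).take u.length = u}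

lemma occ_def (u w : Word) : occ u w = (occSet u w).ncard := rfl

lemma occSet_finite (u w : Word) : (occSet u w).Finite :=
  (Set.finite_Iic w.length).subset fun i hi => le_trans (Nat.le_add_right _ _) hi.1

lemma mem_occSet_iff_append :
    i ∈ occSet u w ↔ ∃ s t : Word, w = s ++ u ++ t ∧ s.length = i := by
  constructor
  · rintro ⟨h1, h2⟩
    have hiw : i ≤ w.length := le_trans (Nat.le_add_right _ _) h1
    refine ⟨w.take i, w.drop (i + u.length), ?_, by rw [List.length_take]; omega⟩
    have hdi : w.drop i = u ++ w.drop (i + u.length) := by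
      conv_lhs => rw [← List.take_append_drop u.length (w.drop i)]
      rw [h2, List.drop_drop]
    rw [List.append_assoc, ← hdi, List.take_append_drop]
  · rintro ⟨s, t, rfl, rfl⟩
    constructor
    · simp only [List.length_append]; omega
    · rw [List.append_assoc, List.drop_left, List.take_left]

lemma infix_iff_occSet : u <:+: w ↔ (occSet u w).Nonempty := by
  constructor
  · rintro ⟨s, t, h⟩
    exact ⟨s.length, mem_occSet_iff_append.2 ⟨s, t, h.symm, rfl⟩⟩
  · rintro ⟨i, hi⟩
    obtain ⟨s, t, h, _⟩ := mem_occSet_iff_append.1 hi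
    exact ⟨s, t, h.symm⟩

lemma occSet_eq_singleton_of_occ_one (h : occ u w = 1) (hi : i ∈ occSet u w) :
    occSet u w = {i} := by
  rw [occ_def, Set.ncard_eq_one] at h
  obtain ⟨a, ha⟩ := h
  have : i = a := by rw [ha] at hi; exact hi
  rw [← this] at ha
  exact ha

/-! #### factor sets -/

lemma mem_factorSet : u ∈ factorSet w n ↔ u.length = n ∧ u <:+: w := Iff.rfl

lemma factorSet_finite (w : Word) (n : ℕ) : (factorSet w n).Finite := by
  apply ((Set.finite_Iic w.length).image (fun i => (w.drop i).take n)).subset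
  rintro u ⟨hl, hinf⟩
  obtain ⟨i, hi⟩ := infix_iff_occSet.1 hinf
  exact ⟨i, by simpa using le_trans (Nat.le_add_right _ _) hi.1, by rw [← hl]; exact hi.2⟩

lemma factorSet_zero (w : Word) : factorSet w 0 = {[]} := by
  ext u
  simp only [mem_factorSet, List.length_eq_zero_iff, Set.mem_singleton_iff]
  constructor
  · rintro ⟨h, _⟩; exact h
  · rintro rfl; exact ⟨rfl, List.nil_infix⟩

lemma fc_zero (w : Word) : (factorSet w 0).ncard = 1 := by
  rw [factorSet_zero]; exact Set.ncard_singleton _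

lemma fc_of_gt (h : w.length < n) : (factorSet w n).ncard = 0 := by
  have : factorSet w n = ∅ := by
    ext u
    simp only [mem_factorSet, Set.mem_empty_iff_false, iff_false, not_and]
    intro hl hinf
    have := hinf.length_le
    omega
  rw [this, Set.ncard_empty]

lemma sfx_mem_factorSet (h : n ≤ w.length) : w.drop (w.length - n) ∈ factorSet w n :=
  ⟨by rw [List.length_drop]; omega, (List.drop_suffix _ _).isInfix⟩

/-! #### extendable factors and right special factors as sets -/

def extSet (w : Word) (n : ℕ) : Set Word := {u | u.length = n ∧ ∃ c : Bool, (u ++ [c]) <:+: w}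

def rsSet (w : Word) (n : ℕ) : Set Word := {u | u.length = n ∧ RightSpecial w u}

lemma infix_of_append_infix (h : (u ++ [c]) <:+: w) : u <:+: w :=
  (List.prefix_append u [c]).isInfix.trans h

lemma extSet_subset : extSet w n ⊆ factorSet w n := by
  rintro u ⟨hl, c, hc⟩; exact ⟨hl, infix_of_append_infix hc⟩

lemma rsSet_subset_ext : rsSet w n ⊆ extSet w n := by
  rintro u ⟨hl, h⟩; exact ⟨hl, false, h.1⟩

lemma extSet_finite (w : Word) (n : ℕ) : (extSet w n).Finite :=
  (factorSet_finite w n).subset extSet_subset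

lemma rsSet_finite (w : Word) (n : ℕ) : (rsSet w n).Finite :=
  (extSet_finite w n).subset rsSet_subset_ext

/-- A choice of an extension letter. -/
def pick (w u : Word) : Bool := if (u ++ [false]) <:+: w then false else true

lemma pick_spec (h : ∃ c : Bool, (u ++ [c]) <:+: w) : (u ++ [pick w u]) <:+: w := by
  unfold pick
  split_ifs with hf
  · exact hf
  · obtain ⟨c, hc⟩ := h
    cases c
    · exact absurd hc hf
    · exact hc

lemma pick_spec' (h : RightSpecial w u) : (u ++ [!pick w u]) <:+: w := by
  unfold pick
  split_ifs with hf
  · simpa using h.2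
  · simpa using h.1

/-- Named extension maps (to avoid beta-reduction issues with lambdas). -/
def ext1 (w u : Word) : Word := u ++ [pick w u]
def ext2 (w u : Word) : Word := u ++ [!pick w u]

/-- Upper counting bound: each factor of length `n+1` is an extension. -/
lemma fc_succ_le_ext_add_rs (w : Word) (n : ℕ) :
    (factorSet w (n + 1)).ncard ≤ (extSet w n).ncard + (rsSet w n).ncard := by
  have hsub : factorSet w (n + 1) ⊆
      ext1 w '' extSet w n ∪ ext2 w '' rsSet w n := by
    rintro v ⟨hlen, hinf⟩
    have hne : v ≠ [] := by intro h; rw [h] at hlen; simp at hlen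
    have hv : v.dropLast ++ [v.getLast hne] = v := List.dropLast_append_getLast hne
    set u' := v.dropLast with hu'
    set c := v.getLast hne with hc
    have hul : u'.length = n := by rw [hu', List.length_dropLast, hlen]; omega
    have h1 : (u' ++ [c]) <:+: w := by rw [hv]; exact hinf
    have huE : u' ∈ extSet w n := ⟨hul, c, h1⟩
    by_cases hpc : pick w u' = c
    · left; exact ⟨u', huE, by unfold ext1; rw [hpc]; exact hv⟩
    · right
      have h2 : (u' ++ [pick w u']) <:+: w := pick_spec ⟨c, h1⟩
      have hRS : RightSpecial w u' := by
        constructor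
        · cases hc2 : c
          · rwa [hc2] at h1
          · have hp : pick w u' = false := by
              cases hp : pick w u'
              · rfl
              · exact absurd (by rw [hp, hc2]) hpc
            rwa [hp] at h2
        · cases hc2 : c
          · have hp : pick w u' = true := by
              cases hp : pick w u'
              · exact absurd (by rw [hp, hc2]) hpc
              · rfl
            rwa [hp] at h2
          · rwa [hc2] at h1
      refine ⟨u', ⟨hul, hRS⟩, ?_⟩
      have hcb : c = !pick w u' := by
        cases hc2 : c <;> cases hp : pick w u' <;> simp_all
      unfold ext2; rw [← hcb]; exact hv
  calc (factorSet w (n + 1)).ncard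
      ≤ (ext1 w '' extSet w n ∪ ext2 w '' rsSet w n).ncard :=
        Set.ncard_le_ncard hsub (((extSet_finite w n).image _).union ((rsSet_finite w n).image _))
    _ ≤ (ext1 w '' extSet w n).ncard + (ext2 w '' rsSet w n).ncard :=
        Set.ncard_union_le _ _
    _ ≤ (extSet w n).ncard + (rsSet w n).ncard :=
        add_le_add (Set.ncard_image_le (extSet_finite w n)) (Set.ncard_image_le (rsSet_finite w n))

/-- Lower counting bound: extensions give distinct factors of length `n+1`. -/
lemma ext_add_sub_le_fc_succ (w : Word) (n : ℕ) (D : Set Word) (hD : D ⊆ rsSet w n) :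
    (extSet w n).ncard + D.ncard ≤ (factorSet w (n + 1)).ncard := by
  have hDfin : D.Finite := (rsSet_finite w n).subset hD
  have hsub : ext1 w '' extSet w n ∪ ext2 w '' D
      ⊆ factorSet w (n + 1) := by
    rintro v (⟨a, ⟨hal, hext⟩, rfl⟩ | ⟨a, haD, rfl⟩)
    · exact ⟨by simp [ext1, hal], pick_spec hext⟩
    · obtain ⟨hal, hRS⟩ := hD haD
      exact ⟨by simp [ext2, hal], pick_spec' hRS⟩
  have hdisj : Disjoint (ext1 w '' extSet w n)
      (ext2 w '' D) := by
    rw [Set.disjoint_left]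
    rintro z ⟨a, ha, rfl⟩ ⟨b, hb, heq⟩
    unfold ext1 ext2 at heq
    have hlen : b.length = a.length := by rw [(hD hb).1, ha.1]
    obtain ⟨hba, h2⟩ := List.append_inj heq hlen
    subst hba
    simp at h2
  have hA : (ext1 w '' extSet w n).ncard = (extSet w n).ncard := by
    apply Set.ncard_image_of_injOn
    intro a ha b hb hab
    unfold ext1 at hab
    exact (List.append_inj hab (by rw [ha.1, hb.1])).1
  have hB : (ext2 w '' D).ncard = D.ncard := by
    apply Set.ncard_image_of_injOn
    intro a ha b hb hab
    unfold ext2 at hab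
    exact (List.append_inj hab (by rw [(hD ha).1, (hD hb).1])).1
  calc (extSet w n).ncard + D.ncard
      = ((ext1 w '' extSet w n) ∪ (ext2 w '' D)).ncard := by
        rw [Set.ncard_union_eq hdisj ((extSet_finite w n).image _) (hDfin.image _), hA, hB]
    _ ≤ (factorSet w (n + 1)).ncard := Set.ncard_le_ncard hsub (factorSet_finite w (n + 1))

/-- If an occurrence has room to the right, the factor is extendable. -/
lemma exists_ext_of_occ (hi : i ∈ occSet u w) (hlt : i + u.length < w.length) :
    ∃ c : Bool, (u ++ [c]) <:+: w := by
  have hlen : u.length < (w.drop i).length := by rw [List.length_drop]; omega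
  refine ⟨(w.drop i)[u.length], ?_⟩
  rw [infix_iff_occSet]
  refine ⟨i, ?_, ?_⟩
  · simp only [List.length_append, List.length_singleton]; omega
  · rw [List.length_append, List.length_singleton, List.take_succ, hi.2,
      List.getElem?_eq_getElem hlen]
    rfl

lemma factorSet_subset_ext_union (w : Word) (n : ℕ) :
    factorSet w n ⊆ extSet w n ∪ {w.drop (w.length - n)} := by
  rintro u ⟨hl, hinf⟩
  by_cases hE : ∃ c : Bool, (u ++ [c]) <:+: w
  · exact Or.inl ⟨hl, hE⟩
  · right
    obtain ⟨i, hi⟩ := infix_iff_occSet.1 hinf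
    have hin : i + n = w.length := by
      by_contra h
      have hlt : i + u.length < w.length := by
        have := hi.1; rw [hl] at this ⊢; omega
      exact hE (exists_ext_of_occ hi hlt)
    have hieq : w.length - n = i := by omega
    have := hi.2
    rw [hl] at this
    rw [Set.mem_singleton_iff, ← this, hieq,
      List.take_of_length_le (by rw [List.length_drop]; omega)]

lemma fc_le_ext_add_one (w : Word) (n : ℕ) :
    (factorSet w n).ncard ≤ (extSet w n).ncard + 1 :=
  le_trans
    (Set.ncard_le_ncard (factorSet_subset_ext_union w n)
      ((extSet_finite w n).union (Set.finite_singleton _)))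
    (le_trans (Set.ncard_union_le _ _) (by simp))

end Aux
section Aux2

variable {w u v p q x y : Word} {n m i j : ℕ} {c : Bool}

/-! #### Facts about `Kp` (suffix side) -/

lemma occ_self (w : Word) : occ w w = 1 := by
  rw [occ_def]
  have : occSet w w = {0} := by
    ext i
    simp only [occSet, Set.mem_setOf_eq, Set.mem_singleton_iff]
    constructor
    · rintro ⟨h1, _⟩; omega
    · rintro rfl
      exact ⟨by omega, by rw [List.drop_zero, List.take_length]⟩
  rw [this, Set.ncard_singleton]

lemma Kp_mem_spec (w : Word) :
    Kp w ≤ w.length ∧ occ (w.drop (w.length - Kp w)) w = 1 := by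
  have hne : {n | n ≤ w.length ∧ occ (w.drop (w.length - n)) w = 1}.Nonempty :=
    ⟨w.length, le_rfl, by rw [Nat.sub_self, List.drop_zero]; exact occ_self w⟩
  exact Nat.sInf_mem hne

lemma Kp_le_length (w : Word) : Kp w ≤ w.length := (Kp_mem_spec w).1

lemma sfx_mem_occSet (hn : n ≤ w.length) :
    w.length - n ∈ occSet (w.drop (w.length - n)) w := by
  have hl : (w.drop (w.length - n)).length = n := by rw [List.length_drop]; omega
  exact ⟨by rw [hl]; omega, List.take_of_length_le (by rw [hl])⟩

lemma Kset_step (hn1 : n + 1 ≤ w.length) (h : occ (w.drop (w.length - n)) w = 1) :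
    occ (w.drop (w.length - (n + 1))) w = 1 := by
  have hls1 : (w.drop (w.length - (n + 1))).length = n + 1 := by rw [List.length_drop]; omega
  have hlsn : (w.drop (w.length - n)).length = n := by rw [List.length_drop]; omega
  have hmem : w.length - (n + 1) ∈ occSet (w.drop (w.length - (n + 1))) w :=
    sfx_mem_occSet hn1
  have hsingle := occSet_eq_singleton_of_occ_one h (sfx_mem_occSet (by omega))
  have hsub : ∀ j ∈ occSet (w.drop (w.length - (n + 1))) w, j = w.length - (n + 1) := by
    intro j hj
    have hj1 : j + 1 ∈ occSet (w.drop (w.length - n)) w := by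
      refine ⟨by rw [hlsn]; have := hj.1; rw [hls1] at this; omega, ?_⟩
      rw [hlsn]
      have h2 := hj.2
      rw [hls1] at h2
      have e1 : (w.drop (j + 1)).take n = ((w.drop j).take (n + 1)).drop 1 := by
        rw [List.drop_take, Nat.add_sub_cancel]
        congr 1
        rw [List.drop_drop]
      rw [e1, h2, List.drop_drop]
      congr 1
      omega
    rw [hsingle, Set.mem_singleton_iff] at hj1
    omega
  have : occSet (w.drop (w.length - (n + 1))) w = {w.length - (n + 1)} :=
    Set.eq_singleton_iff_unique_mem.2 ⟨hmem, hsub⟩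
  rw [occ_def, this, Set.ncard_singleton]

lemma occ_sfx_one (w : Word) : ∀ n, Kp w ≤ n → n ≤ w.length →
    occ (w.drop (w.length - n)) w = 1 := by
  intro n hK
  induction n, hK using Nat.le_induction with
  | base => intro _; exact (Kp_mem_spec w).2
  | succ n hn ih => intro hn1; exact Kset_step hn1 (ih (by omega))

lemma sfx_occ_two (h : n < Kp w) :
    ∃ i ∈ occSet (w.drop (w.length - n)) w, i + n < w.length := by
  have hn : n ≤ w.length := le_trans (le_of_lt h) (Kp_le_length w)
  have hls : (w.drop (w.length - n)).length = n := by rw [List.length_drop]; omega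
  have hne1 : occ (w.drop (w.length - n)) w ≠ 1 := by
    intro hc
    exact Nat.notMem_of_lt_sInf h ⟨hn, hc⟩
  have hmem := sfx_mem_occSet hn
  have hfin := occSet_finite (w.drop (w.length - n)) w
  have h1 : 0 < (occSet (w.drop (w.length - n)) w).ncard :=
    (Set.ncard_pos hfin).2 ⟨_, hmem⟩
  have h2 : 1 < (occSet (w.drop (w.length - n)) w).ncard := by
    rw [occ_def] at hne1; omega
  obtain ⟨a, b, ha, hb, hab⟩ := (Set.one_lt_ncard_iff hfin).1 h2
  rcases eq_or_ne a (w.length - n) with rfl | ha2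
  · refine ⟨b, hb, ?_⟩
    have := hb.1; rw [hls] at this
    omega
  · refine ⟨a, ha, ?_⟩
    have := ha.1; rw [hls] at this
    omega

lemma factorSet_subset_ext (h : n < Kp w) : factorSet w n ⊆ extSet w n := by
  intro u hu
  rcases factorSet_subset_ext_union w n hu with h1 | h1
  · exact h1
  · rw [Set.mem_singleton_iff] at h1
    subst h1
    obtain ⟨i, hi, hlt⟩ := sfx_occ_two h
    have hn : n ≤ w.length := le_trans (le_of_lt h) (Kp_le_length w)
    have hls : (w.drop (w.length - n)).length = n := by rw [List.length_drop]; omega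
    exact ⟨hls, exists_ext_of_occ hi (by rw [hls]; omega)⟩

lemma occSet_prefix {a b : Word} (h : i ∈ occSet (a ++ b) w) : i ∈ occSet a w := by
  have h1 := h.1
  have h2 := h.2
  rw [List.length_append] at h1 h2
  constructor
  · omega
  · have e : (w.drop i).take a.length = ((w.drop i).take (a.length + b.length)).take a.length := by
      rw [List.take_take]
      congr 1
      omega
    rw [e, h2, List.take_left]

lemma sfx_not_mem_ext (hK : Kp w ≤ n) (hn : n ≤ w.length) :
    w.drop (w.length - n) ∉ extSet w n := by
  rintro ⟨hl, c, hc⟩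
  obtain ⟨j, hj⟩ := infix_iff_occSet.1 hc
  have hj' : j ∈ occSet (w.drop (w.length - n)) w := occSet_prefix hj
  have hsingle := occSet_eq_singleton_of_occ_one (occ_sfx_one w n hK hn) (sfx_mem_occSet hn)
  rw [hsingle, Set.mem_singleton_iff] at hj'
  have := hj.1
  rw [List.length_append, List.length_singleton, hl] at this
  omega

lemma ext_add_one_le_fc (hK : Kp w ≤ n) (hn : n ≤ w.length) :
    (extSet w n).ncard + 1 ≤ (factorSet w n).ncard := by
  have h1 : insert (w.drop (w.length - n)) (extSet w n) ⊆ factorSet w n := by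
    rintro a (rfl | ha)
    · exact sfx_mem_factorSet hn
    · exact extSet_subset ha
  have h2 := Set.ncard_insert_of_notMem (sfx_not_mem_ext hK hn) (extSet_finite w n)
  calc (extSet w n).ncard + 1 = (insert (w.drop (w.length - n)) (extSet w n)).ncard := h2.symm
    _ ≤ (factorSet w n).ncard := Set.ncard_le_ncard h1 (factorSet_finite w n)

/-! #### Facts about `Hp` (prefix side) -/

lemma Hp_mem_spec (w : Word) :
    Hp w ≤ w.length ∧ occ (w.take (Hp w)) w = 1 := by
  have hne : {n | n ≤ w.length ∧ occ (w.take n) w = 1}.Nonempty :=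
    ⟨w.length, le_rfl, by rw [List.take_length]; exact occ_self w⟩
  exact Nat.sInf_mem hne

lemma Hp_le_length (w : Word) : Hp w ≤ w.length := (Hp_mem_spec w).1

lemma pfx_mem_occSet (hn : n ≤ w.length) : 0 ∈ occSet (w.take n) w := by
  have hl : (w.take n).length = n := by rw [List.length_take]; omega
  exact ⟨by rw [hl]; omega, by rw [List.drop_zero, hl]⟩

lemma Hset_step (hn1 : n + 1 ≤ w.length) (h : occ (w.take n) w = 1) :
    occ (w.take (n + 1)) w = 1 := by
  have hl1 : (w.take (n + 1)).length = n + 1 := by rw [List.length_take]; omega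
  have hln : (w.take n).length = n := by rw [List.length_take]; omega
  have hsingle := occSet_eq_singleton_of_occ_one h (pfx_mem_occSet (by omega))
  have hsub : ∀ j ∈ occSet (w.take (n + 1)) w, j = 0 := by
    intro j hj
    have hj0 : j ∈ occSet (w.take n) w := by
      refine ⟨by rw [hln]; have := hj.1; rw [hl1] at this; omega, ?_⟩
      rw [hln]
      have h2 := hj.2
      rw [hl1] at h2
      have e : (w.drop j).take n = ((w.drop j).take (n + 1)).take n := by
        rw [List.take_take]
        congr 1
        omega
      rw [e, h2, List.take_take]
      congr 1
      omega
    rw [hsingle, Set.mem_singleton_iff] at hj0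
    exact hj0
  have : occSet (w.take (n + 1)) w = {0} :=
    Set.eq_singleton_iff_unique_mem.2 ⟨pfx_mem_occSet hn1, hsub⟩
  rw [occ_def, this, Set.ncard_singleton]

lemma occ_pfx_one (w : Word) : ∀ n, Hp w ≤ n → n ≤ w.length → occ (w.take n) w = 1 := by
  intro n hH
  induction n, hH using Nat.le_induction with
  | base => intro _; exact (Hp_mem_spec w).2
  | succ n hn ih => intro hn1; exact Hset_step hn1 (ih (by omega))

lemma Hp_le_of_occ_one (hn : n ≤ w.length) (h : occ (w.take n) w = 1) : Hp w ≤ n :=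
  Nat.sInf_le ⟨hn, h⟩

lemma lt_Hp_of_occ_ne_one (hn : n ≤ w.length) (h : occ (w.take n) w ≠ 1) : n < Hp w := by
  by_contra hc
  push_neg at hc
  exact h (occ_pfx_one w n hc hn)

/-! #### Facts about `Rp` -/

lemma rs_length_lt (h : RightSpecial w u) : u.length < w.length := by
  have := h.1.length_le
  rw [List.length_append, List.length_singleton] at this
  omega

lemma length_mem_Rset (w : Word) :
    w.length ∈ {n | ∀ u : Word, u.length = n → ¬ RightSpecial w u} := by
  intro u hu h
  have := rs_length_lt h
  omega

lemma Rp_le_length (w : Word) : Rp w ≤ w.length := Nat.sInf_le (length_mem_Rset w)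

lemma rs_of_suffix (h : RightSpecial w u) (hs : v <:+ u) : RightSpecial w v := by
  obtain ⟨x, rfl⟩ := hs
  have s1 : v ++ [false] <:+ x ++ v ++ [false] := ⟨x, (List.append_assoc x v [false]).symm⟩
  have s2 : v ++ [true] <:+ x ++ v ++ [true] := ⟨x, (List.append_assoc x v [true]).symm⟩
  exact ⟨s1.isInfix.trans h.1, s2.isInfix.trans h.2⟩

lemma no_rs_of_Rp_le (w : Word) : ∀ n, Rp w ≤ n → ∀ u : Word, u.length = n → ¬ RightSpecial w u := by
  intro n hR
  induction n, hR using Nat.le_induction with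
  | base => exact Nat.sInf_mem ⟨w.length, length_mem_Rset w⟩
  | succ n hn ih =>
    intro u hu hRS
    exact ih (u.drop 1) (by rw [List.length_drop]; omega) (rs_of_suffix hRS (List.drop_suffix 1 u))

lemma exists_rs_of_lt_Rp (h : n < Rp w) : ∃ u : Word, u.length = n ∧ RightSpecial w u := by
  have := Nat.notMem_of_lt_sInf h
  simp only [Set.mem_setOf_eq, not_forall] at this
  obtain ⟨u, hu, hRS⟩ := this
  exact ⟨u, hu, not_not.1 hRS⟩

lemma rs_lt_Rp (h : RightSpecial w u) : u.length < Rp w := by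
  by_contra hc
  push_neg at hc
  exact no_rs_of_Rp_le w u.length hc u rfl h

lemma rsSet_ncard_le_one (h : {u : Word | u.length = n ∧ RightSpecial w u}.Subsingleton) :
    (rsSet w n).ncard ≤ 1 := by
  rcases h.eq_empty_or_singleton with h1 | ⟨a, h1⟩ <;>
    · show (rsSet w n).ncard ≤ 1
      rw [show rsSet w n = _ from h1]
      simp

lemma rsSet_eq_empty (hR : Rp w ≤ n) : rsSet w n = ∅ := by
  ext a
  simp only [rsSet, Set.mem_setOf_eq, Set.mem_empty_iff_false, iff_false, not_and]
  exact fun hl => no_rs_of_Rp_le w n hR a hl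

end Aux2
section Aux3

variable {w u v : Word} {n m : ℕ}

/-- Lower telescope (any word). -/
lemma tele_low (w : Word) : ∀ n, n ≤ w.length + 1 →
    1 + min n (Rp w) + min n (Kp w) ≤ (factorSet w n).ncard + n := by
  intro n
  induction n with
  | zero => intro _; simp [fc_zero]
  | succ m ih =>
    intro hm1
    have hm : m ≤ w.length := by omega
    have hih := ih (by omega)
    have hE0 : (extSet w m).ncard ≤ (factorSet w (m + 1)).ncard := by
      have := ext_add_sub_le_fc_succ w m ∅ (Set.empty_subset _)
      simpa using this
    by_cases hR : m < Rp w
    · obtain ⟨u₀, hu₀l, hu₀⟩ := exists_rs_of_lt_Rp hR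
      have hE1 : (extSet w m).ncard + 1 ≤ (factorSet w (m + 1)).ncard := by
        have h1 := ext_add_sub_le_fc_succ w m {u₀}
          (by rw [Set.singleton_subset_iff]; exact ⟨hu₀l, hu₀⟩)
        rwa [Set.ncard_singleton] at h1
      by_cases hK : m < Kp w
      · have h2 : (factorSet w m).ncard ≤ (extSet w m).ncard :=
          Set.ncard_le_ncard (factorSet_subset_ext hK) (extSet_finite w m)
        omega
      · have h2 : (factorSet w m).ncard ≤ (extSet w m).ncard + 1 := fc_le_ext_add_one w m
        omega
    · by_cases hK : m < Kp w
      · have h2 : (factorSet w m).ncard ≤ (extSet w m).ncard :=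
          Set.ncard_le_ncard (factorSet_subset_ext hK) (extSet_finite w m)
        omega
      · have h2 : (factorSet w m).ncard ≤ (extSet w m).ncard + 1 := fc_le_ext_add_one w m
        omega

/-- Lower telescope in the presence of two distinct right special factors. -/
lemma tele_low_double (hu : RightSpecial w u) (hv : RightSpecial w v)
    (hlen : v.length = u.length) (hne : u ≠ v) : ∀ n, n ≤ w.length + 1 →
    1 + min n (Rp w) + min n (Kp w) + (if u.length < n then 1 else 0) ≤
      (factorSet w n).ncard + n := by
  intro n
  induction n with
  | zero => intro _; simp [fc_zero]
  | succ m ih =>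
    intro hm1
    have hm : m ≤ w.length := by omega
    have hih := ih (by omega)
    have hfc : (factorSet w m).ncard ≤ (extSet w m).ncard +
        (if m < Kp w then 0 else 1) := by
      by_cases hK : m < Kp w
      · simpa [hK] using
          Set.ncard_le_ncard (factorSet_subset_ext hK) (extSet_finite w m)
      · simpa [hK] using fc_le_ext_add_one w m
    by_cases hd : m = u.length
    · -- use the pair {u, v}
      subst hd
      have hpair : ({u, v} : Set Word) ⊆ rsSet w u.length := by
        rintro a (rfl | rfl)
        · exact ⟨rfl, hu⟩
        · exact ⟨hlen, hv⟩
      have hE2 : (extSet w u.length).ncard + 2 ≤ (factorSet w (u.length + 1)).ncard := by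
        have h1 := ext_add_sub_le_fc_succ w u.length {u, v} hpair
        rwa [Set.ncard_pair hne] at h1
      have hR : u.length < Rp w := rs_lt_Rp hu
      split_ifs at hih hfc ⊢ <;> omega
    · have hE0 : (extSet w m).ncard ≤ (factorSet w (m + 1)).ncard := by
        have := ext_add_sub_le_fc_succ w m ∅ (Set.empty_subset _)
        simpa using this
      by_cases hR : m < Rp w
      · obtain ⟨u₀, hu₀l, hu₀⟩ := exists_rs_of_lt_Rp hR
        have hE1 : (extSet w m).ncard + 1 ≤ (factorSet w (m + 1)).ncard := by
          have h1 := ext_add_sub_le_fc_succ w m {u₀}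
            (by rw [Set.singleton_subset_iff]; exact ⟨hu₀l, hu₀⟩)
          rwa [Set.ncard_singleton] at h1
        split_ifs at hih hfc ⊢ <;> omega
      · split_ifs at hih hfc ⊢ <;> omega

/-- Upper telescope, assuming at most one right special factor of each length. -/
lemma tele_up (h5 : ∀ n : ℕ, {u : Word | u.length = n ∧ RightSpecial w u}.Subsingleton) :
    ∀ n, n ≤ w.length + 1 →
    (factorSet w n).ncard + n ≤ 1 + min n (Rp w) + min n (Kp w) := by
  intro n
  induction n with
  | zero => intro _; simp [fc_zero]
  | succ m ih =>
    intro hm1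
    have hm : m ≤ w.length := by omega
    have hih := ih (by omega)
    have hB1 := fc_succ_le_ext_add_rs w m
    have hRS : (rsSet w m).ncard ≤ if m < Rp w then 1 else 0 := by
      by_cases hR : m < Rp w
      · simpa [hR] using rsSet_ncard_le_one (h5 m)
      · simp [hR, rsSet_eq_empty (by omega : Rp w ≤ m)]
    by_cases hK : m < Kp w
    · have hE : (extSet w m).ncard ≤ (factorSet w m).ncard :=
        Set.ncard_le_ncard extSet_subset (factorSet_finite w m)
      split_ifs at hRS <;> omega
    · have hE : (extSet w m).ncard + 1 ≤ (factorSet w m).ncard :=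
        ext_add_one_le_fc (by omega) hm
      split_ifs at hRS <;> omega

/-- `R + K ≤ |w|` for every word. -/
lemma rk_add_le (w : Word) : Rp w + Kp w ≤ w.length := by
  have h := tele_low w (w.length + 1) le_rfl
  rw [fc_of_gt (by omega)] at h
  have h1 := Rp_le_length w
  have h2 := Kp_le_length w
  omega

lemma rk_lt_of_double (hu : RightSpecial w u) (hv : RightSpecial w v)
    (hlen : v.length = u.length) (hne : u ≠ v) : Rp w + Kp w < w.length := by
  have h := tele_low_double hu hv hlen hne (w.length + 1) le_rfl
  rw [fc_of_gt (by omega)] at h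
  have h1 := Rp_le_length w
  have h2 := Kp_le_length w
  have h3 : u.length < w.length + 1 := by have := rs_length_lt hu; omega
  rw [if_pos h3] at h
  omega

lemma length_le_rk (h5 : ∀ n : ℕ, {u : Word | u.length = n ∧ RightSpecial w u}.Subsingleton) :
    w.length ≤ Rp w + Kp w := by
  have h := tele_up h5 (w.length + 1) le_rfl
  rw [fc_of_gt (by omega)] at h
  have h1 := Rp_le_length w
  have h2 := Kp_le_length w
  omega

/-- Step bounds for condition (6). -/
lemma fc_succ_le_add_one
    (h5 : {u : Word | u.length = n ∧ RightSpecial w u}.Subsingleton) :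
    (factorSet w (n + 1)).ncard ≤ (factorSet w n).ncard + 1 := by
  have h1 := fc_succ_le_ext_add_rs w n
  have h2 : (extSet w n).ncard ≤ (factorSet w n).ncard :=
    Set.ncard_le_ncard extSet_subset (factorSet_finite w n)
  have h3 := rsSet_ncard_le_one h5
  omega

lemma fc_le_succ_add_one (w : Word) (n : ℕ) :
    (factorSet w n).ncard ≤ (factorSet w (n + 1)).ncard + 1 := by
  have h1 := fc_le_ext_add_one w n
  have h2 : (extSet w n).ncard ≤ (factorSet w (n + 1)).ncard := by
    have := ext_add_sub_le_fc_succ w n ∅ (Set.empty_subset _)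
    simpa using this
  omega

end Aux3
section Aux4

variable {w u v p q x y : Word} {n m i j : ℕ} {c : Bool}

lemma occSet_reverse (u w : Word) :
    occSet u.reverse w.reverse = (fun i => w.length - u.length - i) '' occSet u w := by
  ext i
  simp only [Set.mem_image]
  constructor
  · intro hi
    obtain ⟨s, t, hw, hs⟩ := mem_occSet_iff_append.1 hi
    have hw' : w = t.reverse ++ u ++ s.reverse := by
      have h := congrArg List.reverse hw
      rw [List.reverse_reverse] at h
      rw [h]
      simp [List.reverse_append, List.append_assoc]
    refine ⟨t.length, mem_occSet_iff_append.2 ⟨t.reverse, s.reverse, hw', by simp⟩, ?_⟩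
    have hl : w.length = t.length + u.length + s.length := by
      rw [hw']
      simp only [List.length_append, List.length_reverse]
    omega
  · rintro ⟨j, hj, rfl⟩
    obtain ⟨s, t, hw, hs⟩ := mem_occSet_iff_append.1 hj
    have hl : w.length = s.length + u.length + t.length := by
      rw [hw]; simp only [List.length_append]
    refine mem_occSet_iff_append.2 ⟨t.reverse, s.reverse, ?_, ?_⟩
    · rw [hw]
      simp [List.reverse_append, List.append_assoc]
    · rw [List.length_reverse]
      omega

lemma occ_reverse (u w : Word) : occ u.reverse w.reverse = occ u w := by
  rw [occ_def, occ_def, occSet_reverse, Set.ncard_image_of_injOn]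
  intro a ha b hb hab
  have ha' : a + u.length ≤ w.length := ha.1
  have hb' : b + u.length ≤ w.length := hb.1
  simp only at hab
  omega

lemma Kp_reverse (w : Word) : Kp w.reverse = Hp w := by
  unfold Kp Hp
  congr 1
  ext n
  simp only [Set.mem_setOf_eq, List.length_reverse]
  constructor
  · rintro ⟨hn, hocc⟩
    refine ⟨hn, ?_⟩
    rw [← occ_reverse (w.take n) w, List.reverse_take]
    exact hocc
  · rintro ⟨hn, hocc⟩
    refine ⟨hn, ?_⟩
    rw [← List.reverse_take, occ_reverse]
    exact hocc

lemma infix_rev_iff (x y : Word) : x <:+: y.reverse ↔ x.reverse <:+: y := by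
  constructor
  · intro h
    have := List.reverse_infix.2 h
    simpa using this
  · intro h
    have := List.reverse_infix.2 h
    simpa using this

lemma RS_reverse (w u : Word) : RightSpecial w.reverse u ↔ LeftSpecial w u.reverse := by
  unfold RightSpecial LeftSpecial
  rw [infix_rev_iff, infix_rev_iff]
  simp [List.reverse_append]

lemma LS_reverse (w u : Word) : LeftSpecial w.reverse u ↔ RightSpecial w u.reverse := by
  have h := RS_reverse w.reverse u.reverse
  rw [List.reverse_reverse, List.reverse_reverse] at h
  exact h.symm

lemma Rp_reverse (w : Word) : Rp w.reverse = Lp w := by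
  unfold Rp Lp
  congr 1
  ext n
  simp only [Set.mem_setOf_eq]
  constructor
  · intro h v hv hLS
    exact h v.reverse (by simp [hv]) ((RS_reverse w v.reverse).2 (by simpa using hLS))
  · intro h v hv hRS
    exact h v.reverse (by simp [hv]) ((RS_reverse w v).1 hRS)

lemma factorSet_reverse (w : Word) (n : ℕ) :
    factorSet w.reverse n = List.reverse '' factorSet w n := by
  ext a
  simp only [mem_factorSet, Set.mem_image]
  constructor
  · rintro ⟨hl, hi⟩
    exact ⟨a.reverse, ⟨by simp [hl], (infix_rev_iff a w).1 hi⟩, by simp⟩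
  · rintro ⟨b, ⟨hl, hi⟩, rfl⟩
    refine ⟨by simp [hl], ?_⟩
    rw [infix_rev_iff]
    simpa using hi

lemma fc_reverse (w : Word) (n : ℕ) :
    (factorSet w.reverse n).ncard = (factorSet w n).ncard := by
  rw [factorSet_reverse]
  exact Set.ncard_image_of_injOn fun a _ b _ h => List.reverse_injective h

lemma trap_reverse (hT : Trapezoidal w) : Trapezoidal w.reverse := by
  intro n
  rw [fc_reverse]
  exact hT n

end Aux4
section Aux5

variable {w u v p q x y : Word} {n m i j : ℕ} {c : Bool}

/-- Two distinct right special factors of the same length yield two distinct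
left special factors of the same length. -/
lemma rs_double_to_ls_double : ∀ n : ℕ, ∀ u v : Word, u.length = n → v.length = n →
    RightSpecial w u → RightSpecial w v → u ≠ v →
    ∃ p q : Word, p.length = q.length ∧ p ≠ q ∧ LeftSpecial w p ∧ LeftSpecial w q := by
  intro n
  induction n with
  | zero =>
    intro u v hu hv _ _ hne
    rw [List.length_eq_zero_iff] at hu hv
    exact absurd (hu.trans hv.symm) hne
  | succ m ih =>
    intro u v hu hv hru hrv hne
    match u, v with
    | [], _ => simp at hu
    | _, [] => simp at hv
    | a :: u', b :: v' =>
      simp only [List.length_cons, Nat.succ_inj] at hu hv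
      by_cases h : u' = v'
      · subst h
        have hab : a ≠ b := fun hh => hne (by rw [hh])
        have e1 : (a :: u') ++ [false] = a :: (u' ++ [false]) := by simp
        have e2 : (a :: u') ++ [true] = a :: (u' ++ [true]) := by simp
        have e3 : (b :: u') ++ [false] = b :: (u' ++ [false]) := by simp
        have e4 : (b :: u') ++ [true] = b :: (u' ++ [true]) := by simp
        have hia : (a :: (u' ++ [false])) <:+: w := by rw [← e1]; exact hru.1
        have hib : (b :: (u' ++ [false])) <:+: w := by rw [← e3]; exact hrv.1
        have hia' : (a :: (u' ++ [true])) <:+: w := by rw [← e2]; exact hru.2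
        have hib' : (b :: (u' ++ [true])) <:+: w := by rw [← e4]; exact hrv.2
        refine ⟨u' ++ [false], u' ++ [true], by simp, ?_, ?_, ?_⟩
        · intro hh
          have := congrArg (fun l => l.drop u'.length) hh
          simp only [List.drop_left] at this
          simp at this
        · cases ha : a <;> cases hb : b
          · exact absurd (ha.trans hb.symm) hab
          · exact ⟨by rwa [ha] at hia, by rwa [hb] at hib⟩
          · exact ⟨by rwa [hb] at hib, by rwa [ha] at hia⟩
          · exact absurd (ha.trans hb.symm) hab
        · cases ha : a <;> cases hb : b
          · exact absurd (ha.trans hb.symm) hab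
          · exact ⟨by rwa [ha] at hia', by rwa [hb] at hib'⟩
          · exact ⟨by rwa [hb] at hib', by rwa [ha] at hia'⟩
          · exact absurd (ha.trans hb.symm) hab
      · have hru' : RightSpecial w u' := rs_of_suffix hru (List.suffix_cons a u')
        have hrv' : RightSpecial w v' := rs_of_suffix hrv (List.suffix_cons b v')
        exact ih u' v' hu hv hru' hrv' h

/-- Mirror image of the previous lemma. -/
lemma ls_double_to_rs_double (hp : LeftSpecial w p) (hq : LeftSpecial w q)
    (hlen : p.length = q.length) (hne : p ≠ q) :
    ∃ a b : Word, a.length = b.length ∧ a ≠ b ∧ RightSpecial w a ∧ RightSpecial w b := by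
  have h1 : RightSpecial w.reverse p.reverse := (RS_reverse w p.reverse).2 (by simpa using hp)
  have h2 : RightSpecial w.reverse q.reverse := (RS_reverse w q.reverse).2 (by simpa using hq)
  obtain ⟨p', q', hl', hne', hp', hq'⟩ :=
    rs_double_to_ls_double (w := w.reverse) p.reverse.length p.reverse q.reverse rfl
      (by simp [hlen]) h1 h2
      (fun h => hne (by simpa using congrArg List.reverse h))
  refine ⟨p'.reverse, q'.reverse, by simp [hl'], ?_, ?_, ?_⟩
  · exact fun h => hne' (by simpa using congrArg List.reverse h)
  · exact (LS_reverse w p').1 hp'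
  · exact (LS_reverse w q').1 hq'

/-- Factors of an infix are factors. -/
lemma factorSet_mono (h : v <:+: w) (n : ℕ) : factorSet v n ⊆ factorSet w n := by
  rintro a ⟨ha, hi⟩
  exact ⟨ha, hi.trans h⟩

lemma trap_of_infix (h : v <:+: w) (hT : Trapezoidal w) : Trapezoidal v := fun n =>
  le_trans (Set.ncard_le_ncard (factorSet_mono h n) (factorSet_finite w n)) (hT n)

/-- A factor of `w` that is not a factor of `w.tail` is the prefix of `w`,
occurring exactly once. -/
lemma new_factor_tail (hv : v <:+: w) (hvt : ¬ v <:+: w.tail) :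
    v = w.take v.length ∧ occSet v w = {0} := by
  have hocc0 : ∀ i ∈ occSet v w, i = 0 := by
    intro i hi
    by_contra h0
    apply hvt
    rw [infix_iff_occSet]
    refine ⟨i - 1, ?_, ?_⟩
    · have := hi.1
      rw [List.length_tail]
      omega
    · have h2 := hi.2
      have e : w.tail.drop (i - 1) = w.drop i := by
        rw [← List.drop_one, List.drop_drop]
        congr 1
        omega
      rw [e]
      exact h2
  obtain ⟨i, hi⟩ := infix_iff_occSet.1 hv
  have hi0 : i = 0 := hocc0 i hi
  subst hi0
  have h2 := hi.2
  rw [List.drop_zero] at h2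
  constructor
  · exact h2.symm
  · exact Set.eq_singleton_iff_unique_mem.2 ⟨hi, hocc0⟩

/-- Lemma "ONE": a pair of distinct right special factors of length `n` in `w`,
with no such pair in `w.tail`, forces `Hp w = n + 1`. -/
lemma one_lemma
    (htail : ∀ p q : Word, p.length = n → q.length = n →
      RightSpecial w.tail p → RightSpecial w.tail q → p = q)
    (hu : RightSpecial w u) (hv : RightSpecial w v)
    (hlu : u.length = n) (hlv : v.length = n) (hne : u ≠ v) : Hp w = n + 1 := by
  -- one of u, v is not right special in w.tail
  have hx : ∃ x : Word, x.length = n ∧ RightSpecial w x ∧ ¬ RightSpecial w.tail x := by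
    by_cases h1 : RightSpecial w.tail u
    · by_cases h2 : RightSpecial w.tail v
      · exact absurd (htail u v hlu hlv h1 h2) hne
      · exact ⟨v, hlv, hv, h2⟩
    · exact ⟨u, hlu, hu, h1⟩
  obtain ⟨x, hlx, hxw, hxt⟩ := hx
  have hc : ∃ c : Bool, (x ++ [c]) <:+: w ∧ ¬ (x ++ [c]) <:+: w.tail := by
    rcases not_and_or.1 hxt with h | h
    · exact ⟨false, hxw.1, h⟩
    · exact ⟨true, hxw.2, h⟩
  obtain ⟨c, hcw, hct⟩ := hc
  obtain ⟨hxc, hocc⟩ := new_factor_tail hcw hct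
  have hlxc : (x ++ [c]).length = n + 1 := by simp [hlx]
  have hlen1 : n + 1 ≤ w.length := by
    have := hcw.length_le
    omega
  have hxc' : x ++ [c] = w.take (n + 1) := by rw [← hlxc]; exact hxc
  have hocc1 : occ (w.take (n + 1)) w = 1 := by
    rw [← hxc', occ_def, hocc, Set.ncard_singleton]
  have hH1 : Hp w ≤ n + 1 := Hp_le_of_occ_one hlen1 hocc1
  -- x is the prefix of length n and occurs at least twice
  have hxp : x = w.take n := by
    have e1 : (w.take (n + 1)).take n = w.take n := by
      rw [List.take_take]
      congr 1
      omega
    rw [← e1, ← hxc', ← hlx, List.take_left]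
  have h2occ : occ (w.take n) w ≠ 1 := by
    rw [← hxp]
    obtain ⟨i, hif⟩ := infix_iff_occSet.1 hxw.1
    obtain ⟨j, hjt⟩ := infix_iff_occSet.1 hxw.2
    have hix : i ∈ occSet x w := occSet_prefix hif
    have hjx : j ∈ occSet x w := occSet_prefix hjt
    have hij : i ≠ j := by
      rintro rfl
      have h1 := hif.2
      have h2 := hjt.2
      rw [show (x ++ [false]).length = n + 1 by simp [hlx]] at h1
      rw [show (x ++ [true]).length = n + 1 by simp [hlx]] at h2
      have := h1.symm.trans h2
      simp at this
    intro hocc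
    have hs := occSet_eq_singleton_of_occ_one hocc hix
    rw [hs, Set.mem_singleton_iff] at hjx
    have hs2 := occSet_eq_singleton_of_occ_one hocc (by rw [hs]; exact Set.mem_singleton i)
    exact hij (hjx ▸ rfl)
  have hgt : n < Hp w := lt_Hp_of_occ_ne_one (by omega) h2occ
  omega

/-- Lemma "TWO": in a trapezoidal word, a pair of distinct right special factors
of length `n` forces `Kp w ≤ n`. -/
lemma two_lemma (hT : Trapezoidal w)
    (hu : RightSpecial w u) (hv : RightSpecial w v)
    (hlu : u.length = n) (hlv : v.length = n) (hne : u ≠ v) : Kp w ≤ n := by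
  by_contra hK
  push_neg at hK
  have hchain : ∀ j, j ≤ n → j + 1 ≤ (factorSet w j).ncard := by
    intro j
    induction j with
    | zero => intro _; rw [fc_zero]
    | succ m ih =>
      intro hm
      have h1 : (factorSet w m).ncard ≤ (extSet w m).ncard :=
        Set.ncard_le_ncard (factorSet_subset_ext (by omega)) (extSet_finite w m)
      have hD : ({u.drop (n - m)} : Set Word) ⊆ rsSet w m := by
        rw [Set.singleton_subset_iff]
        exact ⟨by rw [List.length_drop, hlu]; omega,
          rs_of_suffix hu (List.drop_suffix _ _)⟩
      have h2 := ext_add_sub_le_fc_succ w m {u.drop (n - m)} hD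
      rw [Set.ncard_singleton] at h2
      have h3 := ih (by omega)
      omega
  have hD2 : ({u, v} : Set Word) ⊆ rsSet w n := by
    rintro a (rfl | rfl)
    · exact ⟨hlu, hu⟩
    · exact ⟨hlv, hv⟩
  have h2 := ext_add_sub_le_fc_succ w n {u, v} hD2
  rw [Set.ncard_pair hne] at h2
  have h3 : (factorSet w n).ncard ≤ (extSet w n).ncard :=
    Set.ncard_le_ncard (factorSet_subset_ext hK) (extSet_finite w n)
  have h4 := hchain n le_rfl
  have h5 := hT (n + 1)
  omega

/-- Main induction: a trapezoidal word has no two distinct right special factors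
of the same length. -/
lemma no_rs_double : ∀ N : ℕ, ∀ w : Word, w.length ≤ N → Trapezoidal w →
    ∀ u v : Word, u.length = v.length → RightSpecial w u → RightSpecial w v → u = v := by
  intro N
  induction N with
  | zero =>
    intro w hw _ u v _ hu _
    have := rs_length_lt hu
    omega
  | succ N ih =>
    intro w hw hT u v hlen hru hrv
    by_contra hne
    have hwpos : 1 ≤ w.length := by have := rs_length_lt hru; omega
    have htail : ∀ p q : Word, p.length = u.length → q.length = u.length →
        RightSpecial w.tail p → RightSpecial w.tail q → p = q := by
      intro p q hp hq h1 h2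
      exact ih w.tail (by rw [List.length_tail]; omega)
        (trap_of_infix (w.tail_suffix.isInfix) hT) p q (hp.trans hq.symm) h1 h2
    have hONE : Hp w = u.length + 1 := one_lemma htail hru hrv rfl hlen.symm hne
    have hTWO : Kp w ≤ u.length := two_lemma hT hru hrv rfl hlen.symm hne
    obtain ⟨p, q, hpq, hpqne, hp, hq⟩ :=
      rs_double_to_ls_double u.length u v rfl hlen.symm hru hrv hne
    have hrev1 : RightSpecial w.reverse p.reverse :=
      (RS_reverse w p.reverse).2 (by simpa using hp)
    have hrev2 : RightSpecial w.reverse q.reverse :=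
      (RS_reverse w q.reverse).2 (by simpa using hq)
    have hrevne : p.reverse ≠ q.reverse :=
      fun h => hpqne (by simpa using congrArg List.reverse h)
    have hrevlen : p.reverse.length = q.reverse.length := by simp [hpq]
    have hTrev : Trapezoidal w.reverse := trap_reverse hT
    have htailrev : ∀ p' q' : Word, p'.length = p.reverse.length →
        q'.length = p.reverse.length →
        RightSpecial w.reverse.tail p' → RightSpecial w.reverse.tail q' → p' = q' := by
      intro p' q' hp' hq' h1 h2
      exact ih w.reverse.tail (by rw [List.length_tail, List.length_reverse]; omega)
        (trap_of_infix (w.reverse.tail_suffix.isInfix) hTrev) p' q'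
        (hp'.trans hq'.symm) h1 h2
    have hONE' : Hp w.reverse = p.reverse.length + 1 :=
      one_lemma htailrev hrev1 hrev2 rfl hrevlen.symm hrevne
    have hTWO' : Kp w.reverse ≤ p.reverse.length :=
      two_lemma hTrev hrev1 hrev2 rfl hrevlen.symm hrevne
    have d1 : Kp w.reverse = Hp w := Kp_reverse w
    have d2 : Kp w = Hp w.reverse := by
      have := Kp_reverse w.reverse
      rwa [List.reverse_reverse] at this
    omega

end Aux5
section Assembly

variable {w : Word}

lemma trap_rs_subsingleton (hT : Trapezoidal w) (n : ℕ) :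
    {u : Word | u.length = n ∧ RightSpecial w u}.Subsingleton := by
  rintro a ⟨ha, hra⟩ b ⟨hb, hrb⟩
  exact no_rs_double w.length w le_rfl hT a b (ha.trans hb.symm) hra hrb

lemma rs_ss_of_ls_ss
    (h4 : ∀ n : ℕ, {u : Word | u.length = n ∧ LeftSpecial w u}.Subsingleton) :
    ∀ n : ℕ, {u : Word | u.length = n ∧ RightSpecial w u}.Subsingleton := by
  intro n
  rintro a ⟨ha, hra⟩ b ⟨hb, hrb⟩
  by_contra hne
  obtain ⟨p, q, hpq, hpqne, hp, hq⟩ :=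
    rs_double_to_ls_double n a b ha hb hra hrb hne
  exact hpqne (h4 p.length ⟨rfl, hp⟩ ⟨hpq.symm, hq⟩)

lemma ls_ss_of_rs_ss
    (h5 : ∀ n : ℕ, {u : Word | u.length = n ∧ RightSpecial w u}.Subsingleton) :
    ∀ n : ℕ, {u : Word | u.length = n ∧ LeftSpecial w u}.Subsingleton := by
  intro n
  rintro a ⟨ha, hla⟩ b ⟨hb, hlb⟩
  by_contra hne
  obtain ⟨p, q, hpq, hpqne, hp, hq⟩ :=
    ls_double_to_rs_double hla hlb (ha.trans hb.symm) hne
  exact hpqne (h5 p.length ⟨rfl, hp⟩ ⟨hpq.symm, hq⟩)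

/-- Transfer of subsingleton conditions through reversal. -/
lemma rs_ss_reverse_iff :
    (∀ n : ℕ, {u : Word | u.length = n ∧ RightSpecial w.reverse u}.Subsingleton) ↔
    (∀ n : ℕ, {u : Word | u.length = n ∧ LeftSpecial w u}.Subsingleton) := by
  constructor
  · intro h n
    rintro a ⟨ha, hla⟩ b ⟨hb, hlb⟩
    have h1 : RightSpecial w.reverse a.reverse := (RS_reverse w a.reverse).2 (by simpa using hla)
    have h2 : RightSpecial w.reverse b.reverse := (RS_reverse w b.reverse).2 (by simpa using hlb)
    have := h n ⟨by simp [ha], h1⟩ ⟨by simp [hb], h2⟩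
    simpa using congrArg List.reverse this
  · intro h n
    rintro a ⟨ha, hra⟩ b ⟨hb, hrb⟩
    have h1 : LeftSpecial w a.reverse := (RS_reverse w a).1 hra
    have h2 : LeftSpecial w b.reverse := (RS_reverse w b).1 hrb
    have := h n ⟨by simp [ha], h1⟩ ⟨by simp [hb], h2⟩
    simpa using congrArg List.reverse this

end Assembly

/-- Characterizations of trapezoidal words (Proposition 2 of the paper). -/
theorem trapezoidal_tfae (w : Word) :
    [ Trapezoidal w,
      w.length = Lp w + Hp w,
      w.length = Rp w + Kp w,
      ∀ n : ℕ, {u : Word | u.length = n ∧ LeftSpecial w u}.Subsingleton,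
      ∀ n : ℕ, {u : Word | u.length = n ∧ RightSpecial w u}.Subsingleton,
      ∀ n : ℕ, (((factorSet w (n + 1)).ncard : ℤ) - ((factorSet w n).ncard : ℤ)).natAbs ≤ 1
    ].TFAE := by
  have h53 : ∀ v : Word, (∀ n : ℕ, {u : Word | u.length = n ∧ RightSpecial v u}.Subsingleton) →
      v.length = Rp v + Kp v := by
    intro v h5
    have h1 := length_le_rk h5
    have h2 := rk_add_le v
    omega
  have h35 : ∀ v : Word, v.length = Rp v + Kp v →
      (∀ n : ℕ, {u : Word | u.length = n ∧ RightSpecial v u}.Subsingleton) := by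
    intro v h3 n
    rintro a ⟨ha, hra⟩ b ⟨hb, hrb⟩
    by_contra hne
    have := rk_lt_of_double hra hrb (hb.trans ha.symm) hne
    omega
  tfae_have 1 → 5 := fun hT => trap_rs_subsingleton hT
  tfae_have 5 → 4 := fun h5 => ls_ss_of_rs_ss h5
  tfae_have 4 → 5 := fun h4 => rs_ss_of_ls_ss h4
  tfae_have 5 → 3 := h53 w
  tfae_have 3 → 5 := h35 w
  tfae_have 4 → 2 := by
    intro h4
    have h5rev := rs_ss_reverse_iff.2 h4
    have := h53 w.reverse h5rev
    rwa [List.length_reverse, Rp_reverse, Kp_reverse] at this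
  tfae_have 2 → 4 := by
    intro h2
    have h3rev : w.reverse.length = Rp w.reverse + Kp w.reverse := by
      rw [List.length_reverse, Rp_reverse, Kp_reverse]
      exact h2
    exact rs_ss_reverse_iff.1 (h35 w.reverse h3rev)
  tfae_have 5 → 6 := by
    intro h5 n
    have h1 := fc_succ_le_add_one (h5 n)
    have h2 := fc_le_succ_add_one w n
    omega
  tfae_have 6 → 1 := by
    intro h6 n
    induction n with
    | zero => rw [fc_zero]
    | succ m ih =>
      have := h6 m
      omega
  tfae_finish
end

section
/- Let w be a non-balanced word over {a,b} and let m be the minimal length of a pathological pair of w. Then there exists exactly one word u such that aua and bub are both factors of w and |u| + 2 = m. -/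
open List

lemma cnt_fa_tr (l : List Bool) : l.count false + l.count true = l.length := by
  induction l with
  | nil => simp
  | cons a l ih => cases a <;> simp [List.count_cons] <;> omega

lemma exists_firstDiff : ∀ (u v : List Bool), u.length = v.length → u ≠ v →
    ∃ p x y s t, x ≠ y ∧ u = p ++ x :: s ∧ v = p ++ y :: t ∧ s.length = t.length := by
  intro u
  induction u with
  | nil =>
    intro v h hne
    cases v with
    | nil => exact absurd rfl hne
    | cons b v => simp at h
  | cons a u ih =>
    intro v h hne
    cases v with
    | nil => simp at h
    | cons b v =>
      by_cases hab : a = b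
      · subst hab
        have huv : u ≠ v := by rintro rfl; exact hne rfl
        obtain ⟨p, x, y, s, t, hxy, hu, hv, hst⟩ := ih v (by simpa using h) huv
        exact ⟨a :: p, x, y, s, t, hxy, by simp [hu], by simp [hv], hst⟩
      · exact ⟨[], a, b, u, v, hab, rfl, rfl, by simpa using h⟩

lemma short_pair (w : Word) (m : ℕ)
    (hmin : ∀ f' g' : Word, f' <:+: w → g' <:+: w → f'.length = g'.length →
        g'.count false + 2 ≤ f'.count false → m ≤ f'.length)
    (p s t : List Bool)
    (h1 : ([false] ++ (p ++ false :: s) ++ [false]) <:+: w)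
    (h2 : ([true] ++ (p ++ true :: t) ++ [true]) <:+: w) :
    m ≤ p.length + 2 := by
  have hpf : (false :: p ++ [false]) <:+: w := by
    have h : (false :: p ++ [false]) <+: ([false] ++ (p ++ false :: s) ++ [false]) :=
      ⟨s ++ [false], by simp⟩
    exact h.isInfix.trans h1
  have hpg : (true :: p ++ [true]) <:+: w := by
    have h : (true :: p ++ [true]) <+: ([true] ++ (p ++ true :: t) ++ [true]) :=
      ⟨t ++ [true], by simp⟩
    exact h.isInfix.trans h2
  have := hmin _ _ hpf hpg (by simp)
    (by simp [List.count_append, List.count_cons])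
  simpa using this

lemma exists_u_core (w : Word) (m : ℕ) (f g : Word)
    (hf : f <:+: w) (hg : g <:+: w) (hfl : f.length = m) (hgl : g.length = m)
    (hc : g.count false + 2 ≤ f.count false)
    (hmin : ∀ f' g' : Word, f' <:+: w → g' <:+: w → f'.length = g'.length →
        g'.count false + 2 ≤ f'.count false → m ≤ f'.length) :
    ∃ u : Word, ([false] ++ u ++ [false]) <:+: w ∧ ([true] ++ u ++ [true]) <:+: w ∧
      u.length + 2 = m := by
  have hm2 : 2 ≤ m := by
    have : f.count false ≤ f.length := List.count_le_length
    omega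
  obtain ⟨x, f', rfl⟩ : ∃ x f', f = x :: f' := by
    cases f with
    | nil => simp at hfl; omega
    | cons x f' => exact ⟨x, f', rfl⟩
  obtain ⟨y, g', rfl⟩ : ∃ y g', g = y :: g' := by
    cases g with
    | nil => simp at hgl; omega
    | cons y g' => exact ⟨y, g', rfl⟩
  have hf'len : f'.length = m - 1 := by simp at hfl; omega
  have hg'len : g'.length = m - 1 := by simp at hgl; omega
  obtain ⟨f₁, x', rfl⟩ : ∃ f₁ x', f' = f₁ ++ [x'] := by
    rcases f'.eq_nil_or_concat with h | ⟨f₁, x', h⟩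
    · rw [h] at hf'len; simp at hf'len; omega
    · exact ⟨f₁, x', by simp [h]⟩
  obtain ⟨g₁, y', rfl⟩ : ∃ g₁ y', g' = g₁ ++ [y'] := by
    rcases g'.eq_nil_or_concat with h | ⟨g₁, y', h⟩
    · rw [h] at hg'len; simp at hg'len; omega
    · exact ⟨g₁, y', by simp [h]⟩
  have hf₁len : f₁.length = m - 2 := by simp at hf'len; omega
  have hg₁len : g₁.length = m - 2 := by simp at hg'len; omega
  have hft : (f₁ ++ [x']) <:+: w := ((List.suffix_cons x _).isInfix).trans hf
  have hgt : (g₁ ++ [y']) <:+: w := ((List.suffix_cons y _).isInfix).trans hg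
  have hfi : (x :: f₁) <:+: w := by
    have h : (x :: f₁) <+: (x :: (f₁ ++ [x'])) := ⟨[x'], by simp⟩
    exact h.isInfix.trans hf
  have hgi : (y :: g₁) <:+: w := by
    have h : (y :: g₁) <+: (y :: (g₁ ++ [y'])) := ⟨[y'], by simp⟩
    exact h.isInfix.trans hg
  have hcf : (x :: (f₁ ++ [x'])).count false
      = f₁.count false + (if x = false then 1 else 0) + (if x' = false then 1 else 0) := by
    cases x <;> cases x' <;> simp [List.count_cons, List.count_append] <;> omega
  have hcg : (y :: (g₁ ++ [y'])).count false
      = g₁.count false + (if y = false then 1 else 0) + (if y' = false then 1 else 0) := by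
    cases y <;> cases y' <;> simp [List.count_cons, List.count_append] <;> omega
  rw [hcf, hcg] at hc
  have hx : x = false ∧ y = true := by
    by_contra h
    have htail : m ≤ (f₁ ++ [x']).length := by
      apply hmin _ _ hft hgt (by simp; omega)
      have h1 : (f₁ ++ [x']).count false
          = f₁.count false + (if x' = false then 1 else 0) := by
        cases x' <;> simp [List.count_append]
      have h2 : (g₁ ++ [y']).count false
          = g₁.count false + (if y' = false then 1 else 0) := by
        cases y' <;> simp [List.count_append]
      rw [h1, h2]
      cases x <;> cases y <;> simp_all <;> omega
    simp at htail; omega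
  obtain ⟨rfl, rfl⟩ := hx
  have hx' : x' = false ∧ y' = true := by
    by_contra h
    have hinit : m ≤ (false :: f₁).length := by
      apply hmin _ _ hfi hgi (by simp; omega)
      have h1 : (false :: f₁).count false = f₁.count false + 1 := by
        simp [List.count_cons]
      have h2 : (true :: g₁).count false = g₁.count false := by
        simp [List.count_cons]
      rw [h1, h2]
      cases x' <;> cases y' <;> simp_all <;> omega
    simp at hinit; omega
  obtain ⟨rfl, rfl⟩ := hx'
  simp at hc
  -- hc : g₁.count false ≤ f₁.count false
  have heq : f₁ = g₁ := by
    by_contra hne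
    obtain ⟨p, a, b, s, t, hab, hu, hv, hst⟩ :=
      exists_firstDiff f₁ g₁ (by omega) hne
    have hplen : p.length + 1 + s.length = m - 2 := by
      rw [hu] at hf₁len; simp at hf₁len; omega
    cases a <;> cases b
    · exact hab rfl
    · -- a = false, b = true : short prefix pair
      have h1 : ([false] ++ (p ++ false :: s) ++ [false]) <:+: w := by
        rw [hu] at hf; simpa using hf
      have h2 : ([true] ++ (p ++ true :: t) ++ [true]) <:+: w := by
        rw [hv] at hg; simpa using hg
      have := short_pair w m hmin p s t h1 h2
      omega
    · -- a = true, b = false : short suffix pair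
      have hsf : (s ++ [false]) <:+: w := by
        have h : (s ++ [false]) <:+ (false :: (f₁ ++ [false])) := by
          rw [hu]; exact ⟨false :: p ++ [true], by simp⟩
        exact h.isInfix.trans hf
      have hsg : (t ++ [true]) <:+: w := by
        have h : (t ++ [true]) <:+ (true :: (g₁ ++ [true])) := by
          rw [hv]; exact ⟨true :: p ++ [false], by simp⟩
        exact h.isInfix.trans hg
      have hcnt : (t ++ [true]).count false + 2 ≤ (s ++ [false]).count false := by
        rw [hu, hv] at hc
        simp [List.count_append, List.count_cons] at hc ⊢
        omega
      have := hmin _ _ hsf hsg (by simp [hst]) hcnt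
      simp at this; omega
    · exact hab rfl
  subst heq
  exact ⟨f₁, by simpa using hf, by simpa using hg, by omega⟩

/-- For a non-balanced word `w`, if `m` is the minimal length of a pathological pair of `w`,
then there is exactly one word `u` such that `aua` and `bub` are both factors of `w`
and `|u| + 2 = m`. -/
theorem unique_central_of_min_pathological (w : Word) (hw : ¬ BalancedWord w) (m : ℕ)
    (hm : m = sInf {n : ℕ | ∃ f g : Word, PathPair w f g ∧ f.length = n}) :
    ∃! u : Word, ([false] ++ u ++ [false]) <:+: w ∧ ([true] ++ u ++ [true]) <:+: w ∧
      u.length + 2 = m := by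
  have hSne : {n : ℕ | ∃ f g : Word, PathPair w f g ∧ f.length = n}.Nonempty := by
    rw [BalancedWord] at hw
    push_neg at hw
    obtain ⟨u, v, hu, hv, hlen, c, hc⟩ := hw
    have hcf : 2 ≤ ((u.count false : ℤ) - (v.count false : ℤ)).natAbs := by
      cases c
      · omega
      · have h1 := cnt_fa_tr u
        have h2 := cnt_fa_tr v
        omega
    exact ⟨u.length, u, v, ⟨hu, hv, hlen, hcf⟩, rfl⟩
  have hmem : m ∈ {n : ℕ | ∃ f g : Word, PathPair w f g ∧ f.length = n} :=
    hm ▸ Nat.sInf_mem hSne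
  have hmin : ∀ f' g' : Word, f' <:+: w → g' <:+: w → f'.length = g'.length →
      g'.count false + 2 ≤ f'.count false → m ≤ f'.length := by
    intro f' g' h1 h2 h3 h4
    have hS : f'.length ∈ {n : ℕ | ∃ f g : Word, PathPair w f g ∧ f.length = n} :=
      ⟨f', g', ⟨h1, h2, h3, by omega⟩, rfl⟩
    exact hm ▸ Nat.sInf_le hS
  obtain ⟨f, g, ⟨hf, hg, hlen, hcnt⟩, hflen⟩ := hmem
  have hglen : g.length = m := by omega
  have hex : ∃ u : Word, ([false] ++ u ++ [false]) <:+: w ∧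
      ([true] ++ u ++ [true]) <:+: w ∧ u.length + 2 = m := by
    rcases (by omega : g.count false + 2 ≤ f.count false ∨
        f.count false + 2 ≤ g.count false) with h | h
    · exact exists_u_core w m f g hf hg hflen hglen h hmin
    · exact exists_u_core w m g f hg hf hglen hflen h hmin
  obtain ⟨u, hu1, hu2, hu3⟩ := hex
  refine ⟨u, ⟨hu1, hu2, hu3⟩, ?_⟩
  rintro v ⟨hv1, hv2, hv3⟩
  by_contra hne
  obtain ⟨p, a, b, s, t, hab, hvd, hud, hst⟩ :=
    exists_firstDiff v u (by omega) hne
  have hplen : p.length + 1 + s.length + 2 = m := by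
    rw [hvd] at hv3; simp at hv3; omega
  cases a <;> cases b
  · exact hab rfl
  · -- v = p ++ false :: s, u = p ++ true :: t
    have h1 : ([false] ++ (p ++ false :: s) ++ [false]) <:+: w := by rw [← hvd]; exact hv1
    have h2 : ([true] ++ (p ++ true :: t) ++ [true]) <:+: w := by rw [← hud]; exact hu2
    have := short_pair w m hmin p s t h1 h2
    omega
  · -- v = p ++ true :: s, u = p ++ false :: t
    have h1 : ([false] ++ (p ++ false :: t) ++ [false]) <:+: w := by rw [← hud]; exact hu1
    have h2 : ([true] ++ (p ++ true :: s) ++ [true]) <:+: w := by rw [← hvd]; exact hv2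
    have := short_pair w m hmin p t s h1 h2
    omega
  · exact hab rfl
end

section
/- Let w be a non-balanced word over {a,b} and let (f,g) be a pathological pair of w of minimal length. Then f and g do not overlap in w: there is no factor of w of the form uvz with |v| > 0 such that f = uv and g = vz, nor one with g = uv and f = vz. -/
open List

/-- A pathological pair of minimal length of a non-balanced word does not overlap. -/
theorem pathological_pair_no_overlap (w f g : Word) (hw : ¬ BalancedWord w)
    (hfg : PathPair w f g)
    (hmin : ∀ f' g' : Word, PathPair w f' g' → f.length ≤ f'.length) :
    ¬ ∃ u v z : Word, (u ++ v ++ z) <:+: w ∧ v ≠ [] ∧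
        ((f = u ++ v ∧ g = v ++ z) ∨ (g = u ++ v ∧ f = v ++ z)) := by
  rintro ⟨u, v, z, hsub, hv, hcase⟩
  have hvlen : 0 < v.length := List.length_pos_iff.mpr hv
  have hu : u <:+: w :=
    (u.prefix_append (v ++ z)).isInfix.trans (by simpa [List.append_assoc] using hsub)
  have hz : z <:+: w := (List.suffix_append (u ++ v) z).isInfix.trans hsub
  obtain ⟨hfw, hgw, hlen, hcnt⟩ := hfg
  rcases hcase with ⟨hf, hg⟩ | ⟨hg, hf⟩
  · have hlen_uz : u.length = z.length := by
      rw [hf, hg] at hlen; simp at hlen; omega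
    have hcnt' : 2 ≤ ((u.count false : ℤ) - (z.count false : ℤ)).natAbs := by
      have : ((u.count false : ℤ) - (z.count false : ℤ))
          = ((f.count false : ℤ) - (g.count false : ℤ)) := by
        rw [hf, hg]; push_cast [List.count_append]; ring
      rw [this]; exact hcnt
    have := hmin u z ⟨hu, hz, hlen_uz, hcnt'⟩
    have : f.length = u.length + v.length := by rw [hf]; simp
    omega
  · have hlen_uz : z.length = u.length := by
      rw [hf, hg] at hlen; simp at hlen; omega
    have hcnt' : 2 ≤ ((z.count false : ℤ) - (u.count false : ℤ)).natAbs := by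
      have : ((z.count false : ℤ) - (u.count false : ℤ))
          = ((f.count false : ℤ) - (g.count false : ℤ)) := by
        rw [hf, hg]; push_cast [List.count_append]; ring
      rw [this]; exact hcnt
    have := hmin z u ⟨hz, hu, hlen_uz, hcnt'⟩
    have : f.length = v.length + z.length := by rw [hf]; simp
    omega
end

section
/- Let w be a trapezoidal non-balanced word over {a,b}, let (f,g) be its pathological pair of minimal length, and suppose w = pq where p is a suffix of some power of the reversal of the fractional root z_f of f, and q is a prefix of some power of the fractional root z_g of g. Then p and q are balanced words. -/
open List

/-- The minimal period of a word. -/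
noncomputable def minPeriod (u : Word) : ℕ := sInf {p : ℕ | _root_.HasPeriod u p}

/-- The fractional root of a word: its prefix of length the minimal period. -/
noncomputable def fracRoot (u : Word) : Word := u.take (minPeriod u)

lemma myCount_true_add_false (u : Word) : u.count true + u.count false = u.length := by
  induction u with
  | nil => simp
  | cons h t ih => cases h <;> simp [List.count_cons] <;> omega

lemma natAbs_count_eq (u v : Word) (h : u.length = v.length) :
    ((u.count true : ℤ) - (v.count true : ℤ)).natAbs
      = ((u.count false : ℤ) - (v.count false : ℤ)).natAbs := by
  have hu := myCount_true_add_false u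
  have hv := myCount_true_add_false v
  omega

/-- Any length-`|z|` window of `z^k` has the same letter counts as `z`. -/
lemma count_take_of_prefix_drop (z : Word) (hz : 0 < z.length) (c : Bool) :
    ∀ k i u, u <+: ((List.replicate k z).flatten.drop i) → z.length ≤ u.length →
      (u.take z.length).count c = z.count c := by
  intro k
  induction k with
  | zero =>
    intro i u hpre hlen
    simp only [List.replicate_zero, List.flatten_nil, List.drop_nil] at hpre
    rw [List.prefix_nil] at hpre
    subst hpre
    rw [List.length_nil] at hlen
    omega
  | succ k ih =>
    intro i u hpre hlen
    have hrep : (List.replicate (k+1) z).flatten = z ++ (List.replicate k z).flatten := by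
      simp [List.replicate_succ]
    by_cases hi : z.length ≤ i
    · apply ih (i - z.length) u _ hlen
      rw [hrep, List.drop_append, List.drop_eq_nil_of_le hi,
        List.nil_append] at hpre
      exact hpre
    · push_neg at hi
      rw [hrep, List.drop_append,
        Nat.sub_eq_zero_of_le (le_of_lt hi), List.drop_zero] at hpre
      obtain ⟨t, ht⟩ := hpre
      have htake : u.take z.length
          = (z.drop i ++ (List.replicate k z).flatten).take z.length := by
        rw [← ht, List.take_append_of_le_length hlen]
      have hdlen : (z.drop i).length = z.length - i := by simp
      have htake2 : (z.drop i ++ (List.replicate k z).flatten).take z.length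
          = z.drop i ++ ((List.replicate k z).flatten).take i := by
        rw [List.take_append, hdlen,
          List.take_of_length_le (by omega : (z.drop i).length ≤ z.length)]
        congr 2
        omega
      have hXtake : ((List.replicate k z).flatten).take i = z.take i := by
        cases k with
        | zero =>
          have hlen2 : u.length + t.length = z.length - i := by
            have := congrArg List.length ht
            simp at this
            omega
          have hi0 : i = 0 := by omega
          simp [hi0]
        | succ k' =>
          have hrep' : (List.replicate (k'+1) z).flatten
              = z ++ (List.replicate k' z).flatten := by
            simp [List.replicate_succ]
          rw [hrep', List.take_append,
            Nat.sub_eq_zero_of_le (le_of_lt hi), List.take_zero, List.append_nil]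
      rw [htake, htake2, hXtake, List.count_append]
      have hsplit := congrArg (List.count c) (List.take_append_drop i z)
      rw [List.count_append] at hsplit
      omega

/-- Counts of letters in a factor of `z^k`, reduced modulo the period. -/
lemma count_infix_pow (z : Word) (hz : 0 < z.length) :
    ∀ n u k, u.length ≤ n → u <:+: (List.replicate k z).flatten →
      ∃ u' : Word, u' <:+: u ∧ u'.length = u.length % z.length ∧
        ∀ c : Bool, u.count c = (u.length / z.length) * z.count c + u'.count c := by
  intro n
  induction n with
  | zero =>
    intro u k hn _
    have hu : u = [] := List.eq_nil_of_length_eq_zero (by omega)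
    subst hu
    exact ⟨[], List.nil_infix, by simp, by simp⟩
  | succ n ih =>
    intro u k hn hinf
    by_cases hcase : u.length < z.length
    · refine ⟨u, List.infix_rfl, (Nat.mod_eq_of_lt hcase).symm, fun c => ?_⟩
      rw [Nat.div_eq_of_lt hcase]
      simp
    · push_neg at hcase
      have htakecount : ∀ c : Bool, (u.take z.length).count c = z.count c := by
        intro c
        obtain ⟨s, t, hst⟩ := hinf
        apply count_take_of_prefix_drop z hz c k s.length _ ⟨t, ?_⟩ hcase
        rw [← hst, List.append_assoc, List.drop_left]
      have hdropinf : u.drop z.length <:+: (List.replicate k z).flatten :=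
        (List.drop_suffix _ _).isInfix.trans hinf
      have hdlen : (u.drop z.length).length = u.length - z.length := by simp
      obtain ⟨u', hu'inf, hu'len, hu'count⟩ :=
        ih (u.drop z.length) k (by omega) hdropinf
      have hsum : u.length - z.length + z.length = u.length := Nat.sub_add_cancel hcase
      have hmod : (u.length - z.length) % z.length = u.length % z.length := by
        conv_rhs => rw [← hsum]
        rw [Nat.add_mod_right]
      have hdiv : u.length / z.length = (u.length - z.length) / z.length + 1 := by
        conv_lhs => rw [← hsum]
        rw [Nat.add_div_right _ hz]
      refine ⟨u', hu'inf.trans (List.drop_suffix _ _).isInfix, ?_, fun c => ?_⟩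
      · rw [hu'len, hdlen, hmod]
      · have hsplitu := congrArg (List.count c) (List.take_append_drop z.length u)
        rw [List.count_append] at hsplitu
        have h1 := htakecount c
        have h2 := hu'count c
        rw [hdlen] at h2
        rw [hdiv, add_mul, one_mul]
        have hcu : u.count c = z.count c + (u.drop z.length).count c := by omega
        rw [hcu, h2]
        ring

/-- Main argument: a factor of `w` which is also a factor of a power of a word
`z` shorter than the minimal pathological pair length is balanced. -/
lemma balanced_aux (w z p : Word) (m : ℕ) (hz : 0 < z.length) (hzm : z.length ≤ m)
    (hpw : p <:+: w)
    (hmin : ∀ f' g' : Word, PathPair w f' g' → m ≤ f'.length)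
    (hpz : ∃ k, p <:+: (List.replicate k z).flatten) : BalancedWord p := by
  intro u v hu hv hlen c
  by_contra hc
  push_neg at hc
  have hcf : 2 ≤ ((u.count false : ℤ) - (v.count false : ℤ)).natAbs := by
    cases c with
    | false => omega
    | true => rw [← natAbs_count_eq u v hlen]; omega
  obtain ⟨k, hpk⟩ := hpz
  obtain ⟨u', hu'inf, hu'len, hu'count⟩ :=
    count_infix_pow z hz u.length u k le_rfl (hu.trans hpk)
  obtain ⟨v', hv'inf, hv'len, hv'count⟩ :=
    count_infix_pow z hz v.length v k le_rfl (hv.trans hpk)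
  have heq : (u'.count false : ℤ) - (v'.count false : ℤ)
      = (u.count false : ℤ) - (v.count false : ℤ) := by
    have h1 := hu'count false
    have h2 := hv'count false
    rw [hlen] at h1
    have e1 : (u.count false : ℤ)
        = (v.length / z.length) * z.count false + u'.count false := by
      exact_mod_cast congrArg (Nat.cast : ℕ → ℤ) h1
    have e2 : (v.count false : ℤ)
        = (v.length / z.length) * z.count false + v'.count false := by
      exact_mod_cast congrArg (Nat.cast : ℕ → ℤ) h2
    rw [e1, e2]
    ring
  have hpath : PathPair w u' v' := by
    refine ⟨(hu'inf.trans hu).trans hpw, (hv'inf.trans hv).trans hpw, ?_, ?_⟩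
    · rw [hu'len, hv'len, hlen]
    · rw [heq]; exact hcf
  have hge := hmin u' v' hpath
  have hlt : u'.length < z.length := by
    rw [hu'len]; exact Nat.mod_lt _ hz
  omega

/-- In the factorization `w = pq` of a trapezoidal non-balanced word, with
`p` a suffix of a power of the reversed fractional root of `f` and `q` a prefix of a power of
the fractional root of `g`, the words `p` and `q` are balanced. -/
theorem factorization_parts_balanced (w p q f g : Word)
    (htrap : Trapezoidal w) (hnb : ¬ BalancedWord w)
    (hfg : PathPair w f g)
    (hmin : ∀ f' g' : Word, PathPair w f' g' → f.length ≤ f'.length)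
    (hw : w = p ++ q)
    (hp : ∃ k : ℕ, p <:+ (List.replicate k (fracRoot f).reverse).flatten)
    (hq : ∃ k : ℕ, q <+: (List.replicate k (fracRoot g)).flatten) :
    BalancedWord p ∧ BalancedWord q := by
  -- f and g are nonempty
  have hfne : f ≠ [] := by
    intro h
    subst h
    obtain ⟨_, _, hlen, habs⟩ := hfg
    have : g = [] := List.eq_nil_of_length_eq_zero hlen.symm
    subst this
    simp at habs
  have hf1 : 1 ≤ f.length := by
    cases f with
    | nil => exact absurd rfl hfne
    | cons a t => simp
  have hg1 : g.length = f.length := hfg.2.2.1.symm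
  -- minimal periods
  have hperf : _root_.HasPeriod f f.length :=
    ⟨hf1, le_rfl, fun i h => absurd h (by omega)⟩
  have hperg : _root_.HasPeriod g g.length :=
    ⟨by omega, le_rfl, fun i h => absurd h (by omega)⟩
  have hpif : _root_.HasPeriod f (minPeriod f) := by
    have hne : {p : ℕ | _root_.HasPeriod f p}.Nonempty := ⟨f.length, by exact hperf⟩
    exact Nat.sInf_mem hne
  have hpig : _root_.HasPeriod g (minPeriod g) := by
    have hne : {p : ℕ | _root_.HasPeriod g p}.Nonempty := ⟨g.length, by exact hperg⟩
    exact Nat.sInf_mem hne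
  obtain ⟨hpf1, hpf2, -⟩ := hpif
  obtain ⟨hpg1, hpg2, -⟩ := hpig
  have hlenf : (fracRoot f).reverse.length = minPeriod f := by
    simp [fracRoot]
    omega
  have hleng : (fracRoot g).length = minPeriod g := by
    simp [fracRoot]
    omega
  have hpw : p <:+: w := List.IsPrefix.isInfix ⟨q, hw.symm⟩
  have hqw : q <:+: w := List.IsSuffix.isInfix ⟨p, hw.symm⟩
  constructor
  · obtain ⟨k, hk⟩ := hp
    exact balanced_aux w (fracRoot f).reverse p f.length
      (by omega) (by omega) hpw hmin ⟨k, hk.isInfix⟩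
  · obtain ⟨k, hk⟩ := hq
    exact balanced_aux w (fracRoot g) q f.length
      (by omega) (by omega) hqw hmin ⟨k, hk.isInfix⟩
end

section
/- Let w be a palindrome over {a,b}. Then w is trapezoidal if and only if w is balanced. -/
open List

namespace PS

/-- The window of `w` starting at `i` of length `n`. -/
def win (w : Word) (i n : ℕ) : Word := (w.drop i).take n

/-- letter at position i (default false) -/
def gd (w : Word) (i : ℕ) : Bool := w.getD i false

/-- numeric value of a letter -/
def cb (b : Bool) : ℕ := if b then 1 else 0

/-- count of `true`s -/
def cnt (u : Word) : ℕ := u.count true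

lemma count_singleton_true (b : Bool) : cnt [b] = cb b := by
  cases b <;> simp [cnt, cb]

lemma cnt_append (u v : Word) : cnt (u ++ v) = cnt u + cnt v := by
  simp [cnt]

lemma cnt_cons (b : Bool) (u : Word) : cnt (b :: u) = cb b + cnt u := by
  cases b <;> simp [cnt, cb, List.count_cons] <;> omega

lemma cb_le_one (b : Bool) : cb b ≤ 1 := by cases b <;> simp [cb]

lemma cb_inj {a b : Bool} (h : cb a = cb b) : a = b := by
  cases a <;> cases b <;> simp_all [cb]

lemma cb_succ {a b : Bool} (h : cb a = cb b + 1) : a = true ∧ b = false := by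
  cases a <;> cases b <;> simp_all [cb]

lemma cnt_le_length (u : Word) : cnt u ≤ u.length := List.count_le_length

lemma cnt_add_count_false (u : Word) : cnt u + u.count false = u.length := by
  induction u with
  | nil => simp [cnt]
  | cons a l ih =>
    have ih' : count true l + count false l = l.length := ih
    cases a
    · have h1 : count true (false :: l) = count true l := by simp
      have h2 : count false (false :: l) = count false l + 1 := by simp
      simp only [cnt] at *
      rw [h1, h2, List.length_cons]; omega
    · have h1 : count true (true :: l) = count true l + 1 := by simp
      have h2 : count false (true :: l) = count false l := by simp
      simp only [cnt] at *
      rw [h1, h2, List.length_cons]; omega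

lemma win_length {w : Word} {i n : ℕ} (h : i + n ≤ w.length) : (win w i n).length = n := by
  simp [win]; omega

lemma win_infix (w : Word) (i n : ℕ) : win w i n <:+: w := by
  refine List.infix_iff_prefix_suffix.2 ⟨w.drop i, List.take_prefix _ _, List.drop_suffix _ _⟩

lemma win_zero (w : Word) (i : ℕ) : win w i 0 = [] := by simp [win]

lemma infix_exists {u w : Word} (h : u <:+: w) :
    ∃ i, i + u.length ≤ w.length ∧ win w i u.length = u := by
  obtain ⟨s, t, hst⟩ := h
  refine ⟨s.length, ?_, ?_⟩
  · rw [← hst]; simp only [List.length_append]; omega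
  · rw [← hst, win, List.drop_append]
    simp [List.take_append]

lemma win_snoc {w : Word} {i n : ℕ} (h : i + n < w.length) :
    win w i (n + 1) = win w i n ++ [gd w (i + n)] := by
  rw [win, List.take_succ, win]
  congr 1
  rw [List.getElem?_drop, List.getElem?_eq_getElem h]
  simp [gd, List.getElem?_eq_getElem h]

lemma win_cons {w : Word} {i : ℕ} (h : i < w.length) (n : ℕ) :
    win w i (n + 1) = gd w i :: win w (i + 1) n := by
  simp only [gd]
  rw [List.getD_eq_getElem w false h, win, List.drop_eq_getElem_cons h,
    List.take_succ_cons, win]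

lemma win_getD {w : Word} {i n j : ℕ} (h : i + n ≤ w.length) (hj : j < n) :
    gd (win w i n) j = gd w (i + j) := by
  have h1 : j < (win w i n).length := by rw [win_length h]; exact hj
  have h2 : i + j < w.length := by omega
  rw [gd, gd, List.getD_eq_getElem _ false h1, List.getD_eq_getElem _ false h2]
  simp only [win, List.getElem_take, List.getElem_drop]

lemma cnt_step {w : Word} {i n : ℕ} (h : i + n < w.length) :
    cnt (win w i n) + cb (gd w (i + n)) = cb (gd w i) + cnt (win w (i + 1) n) := by
  have e1 := win_snoc h
  have e2 := win_cons (by omega : i < w.length) n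
  have this : cnt (win w i n ++ [gd w (i + n)]) = cnt (gd w i :: win w (i + 1) n) := by
    rw [← e1, ← e2]
  rw [cnt_append, count_singleton_true, cnt_cons] at this
  omega

lemma win_rotate {w : Word} {i n : ℕ} (h : i + n < w.length)
    (hl : gd w i = gd w (i + n)) :
    win w (i + 1) n = (win w i n).rotate 1 := by
  cases n with
  | zero => simp [win_zero]
  | succ m =>
    have hb : (i + 1) + m < w.length := by omega
    have hidx : i + (m + 1) = (i + 1) + m := by omega
    rw [hidx] at hl
    rw [win_cons (by omega : i < w.length) m, List.rotate_cons_succ, List.rotate_zero,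
      win_snoc hb, hl]

lemma cnt_rotate (u : Word) (k : ℕ) : cnt (u.rotate k) = cnt u := by
  exact (List.rotate_perm u k).count_eq true

lemma cnt_reverse (u : Word) : cnt u.reverse = cnt u := by
  simp [cnt]




lemma exists_minimal {P : ℕ → Prop} (h : ∃ n, P n) : ∃ n, P n ∧ ∀ m, m < n → ¬ P m := by
  classical
  exact ⟨Nat.find h, Nat.find_spec h, fun m hm => Nat.find_min h hm⟩

/-- Minimal-gap extraction for integer-step walks. -/
lemma exists_min_gap (f : ℕ → ℕ) (M : ℕ)
    (hstep : ∀ k, k < M → f k ≤ f (k+1) + 1 ∧ f (k+1) ≤ f k + 1)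
    (p q : ℕ) (hp : p ≤ M) (hq : q ≤ M) (himb : f q + 2 ≤ f p) :
    ∃ i g, 2 ≤ g ∧ i + g ≤ M ∧
      (f i = f (i+g) + 2 ∨ f (i+g) = f i + 2) ∧
      (∀ k, i < k → k < i + g → f k + 1 = max (f i) (f (i+g))) := by
  have hNE : ∃ g, ∃ i, i + g ≤ M ∧ (f (i+g) + 2 ≤ f i ∨ f i + 2 ≤ f (i+g)) := by
    rcases lt_trichotomy p q with h | h | h
    · refine ⟨q - p, p, by omega, Or.inl ?_⟩
      have hh : p + (q - p) = q := by omega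
      rw [hh]; exact himb
    · exfalso; rw [h] at himb; omega
    · refine ⟨p - q, q, by omega, Or.inr ?_⟩
      have hh : q + (p - q) = p := by omega
      rw [hh]; exact himb
  obtain ⟨g, ⟨i, hiM, hor⟩, hminP⟩ := exists_minimal hNE
  have hmin : ∀ g', g' < g → ∀ i', i' + g' ≤ M →
      f i' ≤ f (i'+g') + 1 ∧ f (i'+g') ≤ f i' + 1 := by
    intro g' hg' i' hi'
    by_contra hcon
    exact hminP g' hg' ⟨i', hi', by omega⟩
  have hg2 : 2 ≤ g := by
    rcases g with _ | _ | g'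
    · simp only [Nat.add_zero] at hor; omega
    · have hs := hstep i (by omega)
      have hor' : f (i+1) + 2 ≤ f i ∨ f i + 2 ≤ f (i+1) := by
        simpa using hor
      omega
    · omega
  have hexact : f i = f (i+g) + 2 ∨ f (i+g) = f i + 2 := by
    have hs := hstep i (by omega)
    have hm := hmin (g-1) (by omega) (i+1) (by omega)
    have hh : i + 1 + (g - 1) = i + g := by omega
    rw [hh] at hm
    omega
  refine ⟨i, g, hg2, hiM, hexact, ?_⟩
  intro k hk1 hk2
  have e1 := hmin (k - i) (by omega) i (by omega)
  have e2 := hmin (i + g - k) (by omega) k (by omega)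
  have hki : i + (k - i) = k := by omega
  have hkg : k + (i + g - k) = i + g := by omega
  rw [hki] at e1
  rw [hkg] at e2
  omega

/-- rotating by a multiple of a fixed rotation period. -/
lemma rotate_mul {u : List Bool} {d : ℕ} (h : u.rotate d = u) (s : ℕ) :
    u.rotate (d * s) = u := by
  induction s with
  | zero => simp
  | succ m ih =>
    have : d * (m + 1) = d * m + d := by ring
    rw [this, ← List.rotate_rotate, ih, h]

lemma rotate_mod {u : List Bool} {a b : ℕ} (ha : u.rotate a = u) (hb : u.rotate b = u) :
    u.rotate (a % b) = u := by
  rcases Nat.eq_zero_or_pos b with h0 | h0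
  · simp [h0, Nat.mod_zero, ha]
  have hdecomp : a % b + b * (a / b) = a := Nat.mod_add_div a b
  have h1 : u.rotate (b * (a / b)) = u := rotate_mul hb _
  calc u.rotate (a % b) = (u.rotate (b * (a/b))).rotate (a % b) := by rw [h1]
    _ = u.rotate (b * (a/b) + a % b) := List.rotate_rotate _ _ _
    _ = u.rotate a := by rw [Nat.add_comm, hdecomp]
    _ = u := ha

/-- a list-based lower bound for ncard -/
lemma ncard_lower {S : Set (List Bool)} (hfin : S.Finite) (L : List (List Bool))
    (hnd : L.Nodup) (hmem : ∀ x ∈ L, x ∈ S) : L.length ≤ S.ncard := by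
  have h1 : L.toFinset.card = L.length := List.toFinset_card_of_nodup hnd
  have h2 : (↑L.toFinset : Set (List Bool)) ⊆ S := by
    intro x hx
    exact hmem x (by simpa using hx)
  have := Set.ncard_le_ncard h2 hfin
  rwa [Set.ncard_coe_finset, h1] at this



lemma gd_rotate (u : Word) (k j : ℕ) (hj : j < u.length) (hu : u ≠ []) :
    gd (u.rotate k) j = gd u ((j + k) % u.length) := by
  have h1 : j < (u.rotate k).length := by rw [List.length_rotate]; exact hj
  have hlen : 0 < u.length := List.length_pos_iff.2 hu
  have h2 : (j + k) % u.length < u.length := Nat.mod_lt _ hlen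
  rw [gd, gd, List.getD_eq_getElem _ _ h1, List.getD_eq_getElem _ _ h2]
  exact List.getElem_rotate u k j h1

lemma gd_reverse (u : Word) (j : ℕ) (hj : j < u.length) :
    gd u.reverse j = gd u (u.length - 1 - j) := by
  have h1 : j < u.reverse.length := by rw [List.length_reverse]; exact hj
  have h2 : u.length - 1 - j < u.length := by omega
  rw [gd, gd, List.getD_eq_getElem _ _ h1, List.getD_eq_getElem _ _ h2]
  exact List.getElem_reverse h1

lemma win_eq {w : Word} {a b m : ℕ} (h1 : a + m ≤ w.length) (h2 : b + m ≤ w.length)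
    (h : ∀ j, j < m → gd w (a + j) = gd w (b + j)) : win w a m = win w b m := by
  apply List.ext_getElem (by rw [win_length h1, win_length h2])
  intro j hj1 hj2
  have hj : j < m := by rwa [win_length h1] at hj1
  have ha : a + j < w.length := by omega
  have hb : b + j < w.length := by omega
  have e1 : (win w a m)[j] = w[a + j] := by
    simp only [win, List.getElem_take, List.getElem_drop]
  have e2 : (win w b m)[j] = w[b + j] := by
    simp only [win, List.getElem_take, List.getElem_drop]
  rw [e1, e2]
  have := h j hj
  rwa [gd, gd, List.getD_eq_getElem _ _ ha, List.getD_eq_getElem _ _ hb] at this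

lemma factorSet_finite (w : Word) (n : ℕ) : (factorSet w n).Finite := by
  apply Set.Finite.subset ((Set.finite_Iic w.length).image (fun i => win w i n))
  intro u hu
  obtain ⟨hlen, hinf⟩ := hu
  obtain ⟨i, hi, hwin⟩ := infix_exists hinf
  exact ⟨i, by simp only [Set.mem_Iic]; omega, by rwa [hlen] at hwin⟩

/-- Contradiction from a nontrivial rotation period in the minimal-gap configuration:
produces an imbalance at length ρ < n. -/
lemma periodic_contra (w : Word) (n i g ρ : ℕ)
    (hn2 : 2 ≤ n) (hg2 : 2 ≤ g) (hiw : i + g + n ≤ w.length) (hgn : n ≤ g)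
    (hρpos : 0 < ρ) (hρlt : ρ < n) (hρdvd : ρ ∣ n)
    (hE1 : gd w (i+n) = !(gd w i)) (hE2 : gd w (i+g-1) = gd w i)
    (hE3 : gd w (i+g-1+n) = !(gd w i))
    (hE4 : ∀ k, i+1 ≤ k → k ≤ i+g-2 → gd w k = gd w (k+n))
    (hρrot : (win w (i+1) n).rotate ρ = win w (i+1) n) :
    ∃ pp qq, pp + ρ ≤ w.length ∧ qq + ρ ≤ w.length ∧
      cnt (win w qq ρ) + 2 ≤ cnt (win w pp ρ) := by
  set u := win w (i+1) n with hudef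
  have huilen : i + 1 + n ≤ w.length := by omega
  have hulen : u.length = n := win_length huilen
  have hune : u ≠ [] := by
    intro h; rw [h] at hulen; simp at hulen; omega
  have hue : ∀ j, j < n → gd u j = gd w (i+1+j) := by
    intro j hj
    exact win_getD huilen hj
  have huper : ∀ j, j < n → gd u j = gd u ((j + ρ) % n) := by
    intro j hj
    have h := gd_rotate u ρ j (by rw [hulen]; exact hj) hune
    rw [hρrot, hulen] at h
    exact h
  -- 2ρ ≤ n
  have hρhalf : 2 * ρ ≤ n := by
    obtain ⟨k, hk⟩ := hρdvd
    rcases k with _ | _ | k'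
    · omega
    · omega
    · have h2 : n = ρ * k' + 2 * ρ := by rw [hk]; ring
      omega
  -- edge case
  by_cases hedge : g ≤ ρ + 1
  · exfalso
    have he1 : ρ = 1 := by omega
    have he2 : n = 2 := by omega
    have he3 : g = 2 := by omega
    have k1 : gd u 0 = gd w (i+1) := hue 0 (by omega)
    have k2 : gd u 1 = gd w (i+2) := by
      have := hue 1 (by omega); rwa [show i+1+1 = i+2 by omega] at this
    have k3 := huper 0 (by omega)
    rw [he1, he2] at k3
    norm_num at k3
    have i1 : i + g - 1 = i + 1 := by omega
    have i2 : i + n = i + 2 := by omega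
    rw [i1] at hE2
    rw [i2] at hE1
    rw [k1, k2, hE2, hE1] at k3
    simp at k3
  push_neg at hedge
  have hρg : ρ + 2 ≤ g := by omega
  -- the quasiperiodicity fact
  have hfact : ∀ k, i+1 ≤ k → k ≤ i+n+g-ρ-2 → gd w k = gd w (k+ρ) := by
    intro k
    induction k using Nat.strong_induction_on with
    | _ k ih =>
      intro hk1 hk2
      rcases Nat.lt_or_ge (i + n) (k + ρ) with hc | hc
      · rcases Nat.lt_or_ge (i + n) k with hc3 | hc3
        · -- both beyond u: fold down by n
          have f1 : gd w (k - n) = gd w k := by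
            have := hE4 (k - n) (by omega) (by omega)
            rwa [show k - n + n = k by omega] at this
          have f2 : gd w (k - n + ρ) = gd w (k + ρ) := by
            have := hE4 (k - n + ρ) (by omega) (by omega)
            rwa [show k - n + ρ + n = k + ρ by omega] at this
          have f3 := ih (k - n) (by omega) (by omega) (by omega)
          rw [← f1, ← f2, f3]
        · -- k in u, k+ρ beyond: wrap
          have f2 : gd w (k + ρ - n) = gd w (k + ρ) := by
            have := hE4 (k + ρ - n) (by omega) (by omega)
            rwa [show k + ρ - n + n = k + ρ by omega] at this
          set j := k - (i+1) with hjdef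
          have hj : j < n := by omega
          have hmod : (j + ρ) % n = j + ρ - n := by
            rw [Nat.mod_eq_sub_mod (by omega)]
            exact Nat.mod_eq_of_lt (by omega)
          have := huper j hj
          rw [hmod] at this
          have g1 : gd u j = gd w k := by
            rw [hue j hj]; congr 1; omega
          have g2 : gd u (j + ρ - n) = gd w (k + ρ - n) := by
            rw [hue (j + ρ - n) (by omega)]; congr 1; omega
          rw [g1, g2] at this
          rw [this, f2]
      · -- both inside u
        set j := k - (i+1) with hjdef
        have hj : j < n := by omega
        have hmod : (j + ρ) % n = j + ρ := Nat.mod_eq_of_lt (by omega)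
        have := huper j hj
        rw [hmod] at this
        have g1 : gd u j = gd w k := by
          rw [hue j hj]; congr 1; omega
        have g2 : gd u (j + ρ) = gd w (k + ρ) := by
          rw [hue (j + ρ) (by omega)]; congr 1; omega
        rw [g1, g2] at this
        exact this
  -- window counts at level ρ are constant on the interior
  have hconst : ∀ k, i+1 ≤ k → k ≤ i+n+g-ρ-1 → cnt (win w k ρ) = cnt (win w (i+1) ρ) := by
    intro k hk1
    induction k, hk1 using Nat.le_induction with
    | base => intro _; rfl
    | succ k hk ih =>
      intro hk2
      have hfk := hfact k (by omega) (by omega)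
      have hstep := cnt_step (w := w) (i := k) (n := ρ) (by omega)
      rw [← hfk] at hstep
      have := ih (by omega)
      omega
  -- end windows
  have hgd_iρ : gd w (i+ρ) = !(gd w i) := by
    have h1 : gd w (i + ρ) = gd u (ρ - 1) := by
      rw [hue (ρ-1) (by omega)]; congr 1; omega
    have h2 := huper (n-1) (by omega)
    have hmod : (n - 1 + ρ) % n = ρ - 1 := by
      rw [Nat.mod_eq_sub_mod (by omega), show n - 1 + ρ - n = ρ - 1 by omega]
      exact Nat.mod_eq_of_lt (by omega)
    rw [hmod] at h2
    have h3 : gd u (n-1) = gd w (i+n) := by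
      rw [hue (n-1) (by omega)]; congr 1; omega
    rw [h1, ← h2, h3, hE1]
  have hend1 := cnt_step (w := w) (i := i) (n := ρ) (by omega)
  rw [hgd_iρ] at hend1
  -- right end
  have hgd_r1 : gd w (i+n+g-ρ-1) = gd w i := by
    have f1 : gd w (i+g-ρ-1) = gd w (i+n+g-ρ-1) := by
      have := hE4 (i+g-ρ-1) (by omega) (by omega)
      rwa [show i+g-ρ-1+n = i+n+g-ρ-1 by omega] at this
    have f2 : gd w (i+g-ρ-1) = gd w (i+g-1) := by
      have := hfact (i+g-ρ-1) (by omega) (by omega)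
      rwa [show i+g-ρ-1+ρ = i+g-1 by omega] at this
    rw [← f1, f2, hE2]
  have hend2 := cnt_step (w := w) (i := i+n+g-ρ-1) (n := ρ) (by omega)
  rw [show i+n+g-ρ-1+ρ = i+g-1+n by omega, hE3, hgd_r1,
    show i+n+g-ρ-1+1 = i+n+g-ρ by omega] at hend2
  have hcr : cnt (win w (i+n+g-ρ-1) ρ) = cnt (win w (i+1) ρ) :=
    hconst (i+n+g-ρ-1) (by omega) (by omega)
  rw [hcr] at hend2
  -- conclude
  cases hc : gd w i with
  | true =>
    rw [hc] at hend1 hend2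
    simp [cb] at hend1 hend2
    exact ⟨i, i+n+g-ρ, by omega, by omega, by omega⟩
  | false =>
    rw [hc] at hend1 hend2
    simp [cb] at hend1 hend2
    exact ⟨i+n+g-ρ, i, by omega, by omega, by omega⟩

lemma cnt_win_ends {w : Word} {a m : ℕ} (h : a + (m+1+1) ≤ w.length) :
    cnt (win w a (m+1+1)) = cb (gd w a) + (cnt (win w (a+1) m) + cb (gd w (a+1+m))) := by
  rw [win_cons (by omega : a < w.length) (m+1), win_snoc (by omega : (a+1) + m < w.length),
    cnt_cons, cnt_append, count_singleton_true]

lemma notbal_exists_imb (w : Word) (h : ¬ BalancedWord w) :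
    ∃ l p q, p + l ≤ w.length ∧ q + l ≤ w.length ∧
      cnt (win w q l) + 2 ≤ cnt (win w p l) := by
  rw [BalancedWord] at h
  push_neg at h
  obtain ⟨u, v, hu, hv, hlen, c, hc⟩ := h
  have key : cnt v + 2 ≤ cnt u ∨ cnt u + 2 ≤ cnt v := by
    cases c with
    | true =>
      have e1 : u.count true = cnt u := rfl
      have e2 : v.count true = cnt v := rfl
      rw [e1, e2] at hc
      omega
    | false =>
      have e1 := cnt_add_count_false u
      have e2 := cnt_add_count_false v
      omega
  obtain ⟨pi, hpi, hpw⟩ := infix_exists hu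
  obtain ⟨qi, hqi, hqw⟩ := infix_exists hv
  rw [← hlen] at hqi hqw
  rcases key with hk | hk
  · exact ⟨u.length, pi, qi, hpi, hqi, by rw [hpw, hqw]; omega⟩
  · exact ⟨u.length, qi, pi, hqi, hpi, by rw [hpw, hqw]; omega⟩

lemma notbal_key (w : Word) (hpal : w.reverse = w) (hnb : ¬ BalancedWord w) :
    ∃ n, n + 2 ≤ (factorSet w n).ncard := by
  have hQ : ∃ l, ∃ p, ∃ q, p + l ≤ w.length ∧ q + l ≤ w.length ∧
      cnt (win w q l) + 2 ≤ cnt (win w p l) := by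
    obtain ⟨l, p, q, h1, h2, h3⟩ := notbal_exists_imb w hnb
    exact ⟨l, p, q, h1, h2, h3⟩
  obtain ⟨n, ⟨p, q, hpw, hqw, himb⟩, hQmin⟩ := exists_minimal hQ
  have hn2 : 2 ≤ n := by
    rcases n with _ | _ | n'
    · rw [win_zero, win_zero] at himb
      simp [cnt] at himb
    · exfalso
      have h1 := cnt_le_length (win w p (0+1))
      rw [win_length hpw] at h1
      omega
    · omega
  have hwn : n ≤ w.length := by omega
  have hstep : ∀ k, k < w.length - n →
      cnt (win w k n) ≤ cnt (win w (k+1) n) + 1 ∧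
      cnt (win w (k+1) n) ≤ cnt (win w k n) + 1 := by
    intro k hk
    have h := cnt_step (w := w) (i := k) (n := n) (by omega)
    have c1 := cb_le_one (gd w (k+n))
    have c2 := cb_le_one (gd w k)
    omega
  obtain ⟨i, g, hg2, higM, hexact, hmid⟩ :=
    exists_min_gap (fun k => cnt (win w k n)) (w.length - n) hstep p q (by omega) (by omega) himb
  have hiw : i + g + n ≤ w.length := by omega
  -- E facts
  have hsi := cnt_step (w := w) (i := i) (n := n) (by omega)
  have hsg := cnt_step (w := w) (i := i+g-1) (n := n) (by omega)
  rw [show i+g-1+1 = i+g from by omega] at hsg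
  have hm1 := hmid (i+1) (by omega) (by omega)
  have hmg := hmid (i+g-1) (by omega) (by omega)
  obtain ⟨hE1, hE2, hE3⟩ : gd w (i+n) = !(gd w i) ∧ gd w (i+g-1) = gd w i ∧
      gd w (i+g-1+n) = !(gd w i) := by
    rcases hexact with hA | hB
    · rw [Nat.max_eq_left (by omega)] at hm1 hmg
      have c1 : cb (gd w i) = cb (gd w (i+n)) + 1 := by omega
      have c2 : cb (gd w (i+g-1)) = cb (gd w (i+g-1+n)) + 1 := by omega
      obtain ⟨d1, d2⟩ := cb_succ c1
      obtain ⟨d3, d4⟩ := cb_succ c2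
      rw [d1, d2, d3, d4]
      simp
    · rw [Nat.max_eq_right (by omega)] at hm1 hmg
      have c1 : cb (gd w (i+n)) = cb (gd w i) + 1 := by omega
      have c2 : cb (gd w (i+g-1+n)) = cb (gd w (i+g-1)) + 1 := by omega
      obtain ⟨d1, d2⟩ := cb_succ c1
      obtain ⟨d3, d4⟩ := cb_succ c2
      rw [d1, d2, d3, d4]
      simp
  have hE4 : ∀ k, i+1 ≤ k → k ≤ i+g-2 → gd w k = gd w (k+n) := by
    intro k hk1 hk2
    have hs := cnt_step (w := w) (i := k) (n := n) (by omega)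
    have hma := hmid k (by omega) (by omega)
    have hmb := hmid (k+1) (by omega) (by omega)
    exact cb_inj (by omega)
  have hcnt3 : cnt (win w i n) ≠ cnt (win w (i+1) n) ∧
      cnt (win w (i+g) n) ≠ cnt (win w (i+1) n) ∧
      cnt (win w i n) ≠ cnt (win w (i+g) n) := by
    rcases hexact with h | h
    · rw [Nat.max_eq_left (by omega)] at hm1; omega
    · rw [Nat.max_eq_right (by omega)] at hm1; omega
  -- g ≥ n
  have hmidwin : win w (i+1) (g-2) = win w (i+n+1) (g-2) := by
    apply win_eq (by omega) (by omega)
    intro j hj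
    have := hE4 (i+1+j) (by omega) (by omega)
    rwa [show i+1+j+n = i+n+1+j from by omega] at this
  have hc1 := cnt_win_ends (w := w) (a := i) (m := g-2) (by omega)
  rw [show g-2+1+1 = g from by omega, show i+1+(g-2) = i+g-1 from by omega,
    hmidwin, hE2] at hc1
  have hc2 := cnt_win_ends (w := w) (a := i+n) (m := g-2) (by omega)
  rw [show g-2+1+1 = g from by omega, show i+n+1+(g-2) = i+g-1+n from by omega,
    hE1, hE3] at hc2
  have hgn : n ≤ g := by
    by_contra hcon
    push_neg at hcon
    refine hQmin g (by omega) ?_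
    cases hgdi : gd w i
    · rw [hgdi] at hc1 hc2
      simp [cb] at hc1 hc2
      exact ⟨i+n, i, by omega, by omega, by omega⟩
    · rw [hgdi] at hc1 hc2
      simp [cb] at hc1 hc2
      exact ⟨i, i+n, by omega, by omega, by omega⟩
  -- the rotating window
  set u := win w (i+1) n with hudef
  have hulen : u.length = n := win_length (by omega)
  have hune : u ≠ [] := by
    intro h; rw [h] at hulen; simp at hulen; omega
  have hrotwin : ∀ jj, jj ≤ g - 2 → win w (i+1+jj) n = u.rotate jj := by
    intro jj
    induction jj with
    | zero => intro _; rw [List.rotate_zero]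
    | succ m ih =>
      intro hjj
      have h1 := ih (by omega)
      have h2 := win_rotate (w := w) (i := i+1+m) (n := n) (by omega)
        (hE4 (i+1+m) (by omega) (by omega))
      rw [show i+1+m+1 = i+1+(m+1) from by omega] at h2
      rw [h2, h1, List.rotate_rotate]
  have hcmid : ∀ j, cnt (u.rotate j) = cnt (win w (i+1) n) := by
    intro j
    rw [cnt_rotate]
  -- minimal rotation period
  have hNErot : ∃ d, 0 < d ∧ u.rotate d = u :=
    ⟨n, by omega, by rw [← hulen]; exact List.rotate_length u⟩
  obtain ⟨ρ, ⟨hρpos, hρrot⟩, hρmin⟩ := exists_minimal hNErot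
  have hρn : ρ ≤ n := by
    by_contra hcon
    exact hρmin n (by omega) ⟨by omega, by rw [← hulen]; exact List.rotate_length u⟩
  have hρdvd : ρ ∣ n := by
    rcases Nat.eq_zero_or_pos (n % ρ) with h0 | h0
    · exact Nat.dvd_of_mod_eq_zero h0
    · exfalso
      have hr := rotate_mod (u := u) (a := n) (b := ρ)
        (by rw [← hulen]; exact List.rotate_length u) hρrot
      exact hρmin (n % ρ) (by have := Nat.mod_lt n hρpos; omega) ⟨h0, hr⟩
  rcases Nat.lt_or_ge ρ n with hρlt | hρge
  · exfalso
    obtain ⟨pp, qq, h1, h2, h3⟩ := periodic_contra w n i g ρ hn2 hg2 hiw hgn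
      hρpos hρlt hρdvd hE1 hE2 hE3 hE4 hρrot
    exact hQmin ρ (by omega) ⟨pp, qq, h1, h2, h3⟩
  have hρeq : ρ = n := by omega
  -- all rotations distinct
  have hdist : ∀ j₁ j₂, j₁ < n → j₂ < n → u.rotate j₁ = u.rotate j₂ → j₁ = j₂ := by
    have key : ∀ j₁ j₂, j₁ < j₂ → j₂ < n → u.rotate j₁ = u.rotate j₂ → False := by
      intro j₁ j₂ hlt hj2 heq
      have h1 : (u.rotate j₁).rotate (n - j₁) = u := by
        rw [List.rotate_rotate, show j₁ + (n - j₁) = n from by omega, ← hulen,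
          List.rotate_length]
      have h2 : (u.rotate j₂).rotate (n - j₁) = u.rotate (j₂ - j₁) := by
        rw [List.rotate_rotate, show j₂ + (n - j₁) = n + (j₂ - j₁) from by omega,
          ← List.rotate_rotate, ← hulen, List.rotate_length]
      rw [heq, h2] at h1
      exact absurd ⟨by omega, h1⟩ (hρmin (j₂ - j₁) (by omega))
    intro j₁ j₂ h1 h2 heq
    rcases lt_trichotomy j₁ j₂ with h | h | h
    · exact (key j₁ j₂ h h2 heq).elim
    · exact h
    · exact (key j₂ j₁ h h1 heq.symm).elim
  -- factor membership
  have hfac : ∀ k, k + n ≤ w.length → win w k n ∈ factorSet w n :=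
    fun k hk => ⟨win_length hk, win_infix w k n⟩
  have hrotfac : ∀ j, j ≤ g-2 → u.rotate j ∈ factorSet w n := by
    intro j hj
    rw [← hrotwin j hj]
    exact hfac _ (by omega)
  refine ⟨n, ?_⟩
  by_cases hgeq : g = n
  · -- tight case : need a reversed rotation
    have hn1 : 1 ≤ n - 1 := by omega
    by_cases hy : ∃ j, j < n - 1 ∧
        (u.rotate j).reverse ∉ (List.range (n-1)).map (fun j => u.rotate j)
    · obtain ⟨j₀, hj₀, hy'⟩ := hy
      have hL := ncard_lower (factorSet_finite w n)
        (win w i n :: win w (i+g) n :: (u.rotate j₀).reverse ::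
          (List.range (n-1)).map (fun j => u.rotate j)) ?_ ?_
      · rw [List.length_cons, List.length_cons, List.length_cons, List.length_map,
          List.length_range] at hL
        omega
      · -- nodup
        refine List.nodup_cons.2 ⟨?_, List.nodup_cons.2 ⟨?_, List.nodup_cons.2 ⟨hy', ?_⟩⟩⟩
        · intro hmem
          simp only [List.mem_cons, List.mem_map, List.mem_range] at hmem
          rcases hmem with h | h | ⟨j, hj, hje⟩
          · exact hcnt3.2.2 (by rw [h])
          · have : cnt (win w i n) = cnt (win w (i+1) n) := by
              rw [h, cnt_reverse, hcmid]
            exact hcnt3.1 this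
          · have : cnt (win w i n) = cnt (win w (i+1) n) := by
              rw [← hje, hcmid]
            exact hcnt3.1 this
        · intro hmem
          simp only [List.mem_cons, List.mem_map, List.mem_range] at hmem
          rcases hmem with h | ⟨j, hj, hje⟩
          · have : cnt (win w (i+g) n) = cnt (win w (i+1) n) := by
              rw [h, cnt_reverse, hcmid]
            exact hcnt3.2.1 this
          · have : cnt (win w (i+g) n) = cnt (win w (i+1) n) := by
              rw [← hje, hcmid]
            exact hcnt3.2.1 this
        · refine List.Nodup.map_on ?_ (List.nodup_range (n := n-1))
          intro x hx y hyy hxy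
          exact hdist x y (by simp at hx; omega) (by simp at hyy; omega) hxy
      · -- membership
        intro x hx
        simp only [List.mem_cons, List.mem_map, List.mem_range] at hx
        rcases hx with h | h | h | ⟨j, hj, hje⟩
        · rw [h]; exact hfac i (by omega)
        · rw [h]; exact hfac (i+g) (by omega)
        · rw [h]
          have hjfac := hrotfac j₀ (by omega)
          obtain ⟨hl, hinf⟩ := hjfac
          refine ⟨by rw [List.length_reverse]; exact hl, ?_⟩
          rw [← hpal]
          exact List.reverse_infix.2 hinf
        · rw [← hje]; exact hrotfac j (by omega)
    · -- impossible: reversal would fix the missing rotation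
      exfalso
      push_neg at hy
      classical
      set RS : Finset Word := (Finset.range (n-1)).image (fun j => u.rotate j) with hRS
      have hmemRS : ∀ x, x ∈ RS ↔ ∃ j, j < n - 1 ∧ u.rotate j = x := by
        intro x
        simp [hRS, Finset.mem_image, Finset.mem_range]
      have hcard : RS.card = n - 1 := by
        rw [hRS, Finset.card_image_of_injOn, Finset.card_range]
        intro x hx y hyy hxy
        simp only [Finset.coe_range, Set.mem_Iio] at hx hyy
        exact hdist x y (by omega) (by omega) hxy
      have himgsub : RS.image List.reverse ⊆ RS := by
        intro x hx
        simp only [Finset.mem_image] at hx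
        obtain ⟨z, hz, hze⟩ := hx
        obtain ⟨j, hj, hje⟩ := (hmemRS z).1 hz
        have := hy j hj
        rw [hje] at this
        rw [← hze]
        simp only [List.mem_map, List.mem_range] at this
        rcases this with ⟨j', hj', hje'⟩
        exact (hmemRS _).2 ⟨j', hj', hje'⟩
      have himg : RS.image List.reverse = RS :=
        Finset.eq_of_subset_of_card_le himgsub
          (le_of_eq (Finset.card_image_of_injective RS List.reverse_injective).symm)
      have huRS : u ∈ RS := (hmemRS u).2 ⟨0, by omega, List.rotate_zero u⟩
      have hurev : u.reverse ∈ RS := by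
        rw [← himg]
        exact Finset.mem_image.2 ⟨u, huRS, rfl⟩
      obtain ⟨dd, hdd, hddeq⟩ := (hmemRS u.reverse).1 hurev
      have hxrev : (u.rotate (n-1)).reverse = u.rotate (dd+1) := by
        rw [List.reverse_rotate, hulen, Nat.mod_eq_of_lt (by omega),
          show n - (n-1) = 1 from by omega, ← hddeq, List.rotate_rotate]
      rcases Nat.lt_or_ge (dd+1) (n-1) with hdd1 | hdd1
      · have hmem1 : (u.rotate (n-1)).reverse ∈ RS := by
          rw [hxrev]
          exact (hmemRS _).2 ⟨dd+1, hdd1, rfl⟩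
        have hmem2 : u.rotate (n-1) ∈ RS := by
          have : u.rotate (n-1) = ((u.rotate (n-1)).reverse).reverse := by simp
          rw [this, ← himg]
          exact Finset.mem_image.2 ⟨_, hmem1, rfl⟩
        obtain ⟨j, hj, hje⟩ := (hmemRS _).1 hmem2
        have := hdist j (n-1) (by omega) (by omega) hje
        omega
      · have hddn : dd + 1 = n - 1 := by omega
        have hxx : (u.rotate (n-1)).reverse = u.rotate (n-1) := by
          rw [hxrev, hddn]
        -- letter contradiction
        have hxlen : (u.rotate (n-1)).length = n := by rw [List.length_rotate, hulen]
        have hl1 : gd (u.rotate (n-1)) 0 = gd u (n-1) := by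
          rw [gd_rotate u (n-1) 0 (by omega) hune, hulen,
            Nat.zero_add, Nat.mod_eq_of_lt (by omega)]
        have hl2 : gd (u.rotate (n-1)) (n-1) = gd u (n-2) := by
          rw [gd_rotate u (n-1) (n-1) (by omega) hune, hulen,
            Nat.mod_eq_sub_mod (by omega), show n-1+(n-1)-n = n-2 from by omega,
            Nat.mod_eq_of_lt (by omega)]
        have hl3 : gd (u.rotate (n-1)).reverse 0 = gd (u.rotate (n-1)) (n-1) := by
          have h := gd_reverse (u.rotate (n-1)) 0 (by omega)
          rw [hxlen] at h
          simpa using h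
        have hue : ∀ j, j < n → gd u j = gd w (i+1+j) := fun j hj => win_getD (by omega) hj
        have hv1 : gd u (n-1) = gd w (i+n) := by
          rw [hue (n-1) (by omega)]; congr 1; omega
        have hv2 : gd u (n-2) = gd w (i+g-1) := by
          rw [hue (n-2) (by omega)]; congr 1; omega
        have : gd u (n-1) = gd u (n-2) := by
          rw [← hl1, ← hl2, ← hl3, hxx]
        rw [hv1, hv2, hE1, hE2] at this
        exact (Bool.not_eq_self (gd w i)).1 this
  · -- g ≥ n + 1 : all n rotations fit
    have hgn1 : n + 1 ≤ g := by omega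
    have hL := ncard_lower (factorSet_finite w n)
      (win w i n :: win w (i+g) n :: (List.range n).map (fun j => u.rotate j)) ?_ ?_
    · rw [List.length_cons, List.length_cons, List.length_map, List.length_range] at hL
      omega
    · refine List.nodup_cons.2 ⟨?_, List.nodup_cons.2 ⟨?_, ?_⟩⟩
      · intro hmem
        simp only [List.mem_cons, List.mem_map, List.mem_range] at hmem
        rcases hmem with h | ⟨j, hj, hje⟩
        · exact hcnt3.2.2 (by rw [h])
        · have : cnt (win w i n) = cnt (win w (i+1) n) := by
            rw [← hje, hcmid]
          exact hcnt3.1 this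
      · intro hmem
        simp only [List.mem_map, List.mem_range] at hmem
        rcases hmem with ⟨j, hj, hje⟩
        have : cnt (win w (i+g) n) = cnt (win w (i+1) n) := by
          rw [← hje, hcmid]
        exact hcnt3.2.1 this
      · refine List.Nodup.map_on ?_ (List.nodup_range (n := n))
        intro x hx y hyy hxy
        exact hdist x y (by simp at hx; omega) (by simp at hyy; omega) hxy
    · intro x hx
      simp only [List.mem_cons, List.mem_map, List.mem_range] at hx
      rcases hx with h | h | ⟨j, hj, hje⟩
      · rw [h]; exact hfac i (by omega)
      · rw [h]; exact hfac (i+g) (by omega)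
      · rw [← hje]; exact hrotfac j (by omega)


lemma factorSet_zero (w : Word) : factorSet w 0 = {([] : Word)} := by
  ext u
  constructor
  · intro h
    exact List.length_eq_zero_iff.1 h.1
  · intro h
    rw [Set.mem_singleton_iff] at h
    subst h
    exact ⟨rfl, List.nil_infix⟩

lemma balanced_unique_special (w : Word) (hbal : BalancedWord w) :
    ∀ n (z₁ z₂ : Word), z₁.length = n → z₂.length = n →
    (z₁ ++ [false]) <:+: w → (z₁ ++ [true]) <:+: w →
    (z₂ ++ [false]) <:+: w → (z₂ ++ [true]) <:+: w → z₁ = z₂ := by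
  intro n
  induction n with
  | zero =>
    intro z₁ z₂ h1 h2 _ _ _ _
    rw [List.length_eq_zero_iff] at h1 h2
    rw [h1, h2]
  | succ m ih =>
    intro z₁ z₂ h1 h2 ha hb hc hd
    obtain ⟨a, t₁, rfl⟩ : ∃ a t, z₁ = a :: t := by
      cases z₁ with
      | nil => simp at h1
      | cons a t => exact ⟨a, t, rfl⟩
    obtain ⟨b, t₂, rfl⟩ : ∃ b t, z₂ = b :: t := by
      cases z₂ with
      | nil => simp at h2
      | cons b t => exact ⟨b, t, rfl⟩
    have htinf : ∀ (x c : Bool) (t : Word), ((c :: t) ++ [x]) <:+: w → (t ++ [x]) <:+: w := by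
      intro x c t h
      have hsuf : (t ++ [x]) <:+ (c :: t) ++ [x] := by
        rw [List.cons_append]
        exact List.suffix_cons c (t ++ [x])
      exact hsuf.isInfix.trans h
    have hteq : t₁ = t₂ := ih t₁ t₂ (by simpa using h1) (by simpa using h2)
      (htinf false a t₁ ha) (htinf true a t₁ hb) (htinf false b t₂ hc) (htinf true b t₂ hd)
    subst hteq
    by_cases hab : a = b
    · rw [hab]
    · exfalso
      have hu : ((a :: t₁) ++ [a]) <:+: w := by
        cases a with
        | false => exact ha
        | true => exact hb
      have hv : ((b :: t₁) ++ [b]) <:+: w := by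
        cases b with
        | false => exact hc
        | true => exact hd
      have hball := hbal _ _ hu hv (by simp) true
      have hthis : ((cnt ((a :: t₁) ++ [a]) : ℤ) - (cnt ((b :: t₁) ++ [b]) : ℤ)).natAbs ≤ 1 :=
        hball
      have e1 : cnt ((a :: t₁) ++ [a]) = cb a + (cnt t₁ + cb a) := by
        rw [List.cons_append, cnt_cons, cnt_append, count_singleton_true]
      have e2 : cnt ((b :: t₁) ++ [b]) = cb b + (cnt t₁ + cb b) := by
        rw [List.cons_append, cnt_cons, cnt_append, count_singleton_true]
      rw [e1, e2] at hthis
      rcases a with _ | _ <;> rcases b with _ | _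
      · exact hab rfl
      · simp [cb] at hthis; omega
      · simp [cb] at hthis; omega
      · exact hab rfl

lemma trapezoidal_of_balanced (w : Word) (hbal : BalancedWord w) : Trapezoidal w := by
  intro n
  induction n with
  | zero =>
    rw [factorSet_zero]
    simp
  | succ m ih =>
    have hmapsto : ∀ x ∈ factorSet w (m+1), x.dropLast ∈ factorSet w m := by
      intro x hx
      obtain ⟨hlen, hinf⟩ := hx
      refine ⟨?_, (List.dropLast_prefix x).isInfix.trans hinf⟩
      rw [List.length_dropLast, hlen]
      omega
    have key : ∀ x ∈ factorSet w (m+1), ∀ y ∈ factorSet w (m+1), x ≠ y →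
        x.dropLast = y.dropLast →
        (x.dropLast ++ [false]) <:+: w ∧ (x.dropLast ++ [true]) <:+: w ∧
          x.dropLast.length = m := by
      intro x hx y hy hne hdl
      have hxne : x ≠ [] := by
        intro h; rw [h] at hx; exact absurd hx.1 (by simp)
      have hyne : y ≠ [] := by
        intro h; rw [h] at hy; exact absurd hy.1 (by simp)
      have hx' : x.dropLast ++ [x.getLast hxne] = x := List.dropLast_append_getLast hxne
      have hy' : y.dropLast ++ [y.getLast hyne] = y := List.dropLast_append_getLast hyne
      have hlast : x.getLast hxne ≠ y.getLast hyne := by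
        intro h
        apply hne
        rw [← hx', ← hy', hdl, h]
      have hlen : x.dropLast.length = m := by
        rw [List.length_dropLast, hx.1]
        omega
      cases hgx : x.getLast hxne with
      | false =>
        have hgy : y.getLast hyne = true := by
          cases hgy : y.getLast hyne with
          | false => rw [hgx, hgy] at hlast; exact absurd rfl hlast
          | true => rfl
        refine ⟨?_, ?_, hlen⟩
        · have e : x.dropLast ++ [false] = x := by rw [← hgx, hx']
          rw [e]; exact hx.2
        · have e : x.dropLast ++ [true] = y := by rw [hdl, ← hgy, hy']
          rw [e]; exact hy.2
      | true =>
        have hgy : y.getLast hyne = false := by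
          cases hgy : y.getLast hyne with
          | true => rw [hgx, hgy] at hlast; exact absurd rfl hlast
          | false => rfl
        refine ⟨?_, ?_, hlen⟩
        · have e : x.dropLast ++ [false] = y := by rw [hdl, ← hgy, hy']
          rw [e]; exact hy.2
        · have e : x.dropLast ++ [true] = x := by rw [← hgx, hx']
          rw [e]; exact hx.2
    by_cases hsp : ∃ x ∈ factorSet w (m+1), ∃ y ∈ factorSet w (m+1),
        x ≠ y ∧ x.dropLast = y.dropLast
    · obtain ⟨x₀, hx₀, y₀, hy₀, hne₀, hdl₀⟩ := hsp
      obtain ⟨hzf, hzt, hzlen⟩ := key x₀ hx₀ y₀ hy₀ hne₀ hdl₀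
      set z := x₀.dropLast with hzdef
      have hinj : Set.InjOn (fun t : Word => t.dropLast)
          (factorSet w (m+1) \ {z ++ [true]}) := by
        intro x hx y hy hdl0
        have hdl : x.dropLast = y.dropLast := hdl0
        by_contra hne
        obtain ⟨hf, ht, hlen⟩ := key x hx.1 y hy.1 hne hdl
        have hzeq : x.dropLast = z :=
          balanced_unique_special w hbal m _ _ hlen hzlen hf ht hzf hzt
        have hxne : x ≠ [] := by
          intro h; rw [h] at hx; exact absurd hx.1.1 (by simp)
        have hyne : y ≠ [] := by
          intro h; rw [h] at hy; exact absurd hy.1.1 (by simp)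
        have hx' : x.dropLast ++ [x.getLast hxne] = x := List.dropLast_append_getLast hxne
        have hy' : y.dropLast ++ [y.getLast hyne] = y := List.dropLast_append_getLast hyne
        have hlast : x.getLast hxne ≠ y.getLast hyne := by
          intro h
          apply hne
          rw [← hx', ← hy', hdl, h]
        cases hgx : x.getLast hxne with
        | true =>
          apply hx.2
          rw [Set.mem_singleton_iff, ← hx', hgx, hzeq]
        | false =>
          apply hy.2
          have hgy : y.getLast hyne = true := by
            cases hgy : y.getLast hyne with
            | false => rw [hgx, hgy] at hlast; exact absurd rfl hlast
            | true => rfl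
          rw [Set.mem_singleton_iff, ← hy', hgy, ← hdl, hzeq]
      have h1 : (factorSet w (m+1) \ {z ++ [true]}).ncard ≤ (factorSet w m).ncard :=
        Set.ncard_le_ncard_of_injOn _ (fun a ha => hmapsto a ha.1) hinj
          (factorSet_finite w m)
      have h2 : factorSet w (m+1) ⊆ (factorSet w (m+1) \ {z ++ [true]}) ∪ {z ++ [true]} := by
        intro t ht
        by_cases h : t = z ++ [true]
        · right; simp [h]
        · left; exact ⟨ht, by simp [h]⟩
      have h3 := Set.ncard_le_ncard h2
        (Set.Finite.union ((factorSet_finite w (m+1)).diff) (Set.finite_singleton _))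
      have h4 := Set.ncard_union_le (factorSet w (m+1) \ {z ++ [true]}) {z ++ [true]}
      rw [Set.ncard_singleton] at h4
      omega
    · push_neg at hsp
      have hinj : Set.InjOn (fun t : Word => t.dropLast) (factorSet w (m+1)) := by
        intro x hx y hy hdl0
        have hdl : x.dropLast = y.dropLast := hdl0
        by_contra hne
        exact hsp x hx y hy hne hdl
      have h1 : (factorSet w (m+1)).ncard ≤ (factorSet w m).ncard :=
        Set.ncard_le_ncard_of_injOn _ hmapsto hinj (factorSet_finite w m)
      omega


end PS

/-- A palindrome is trapezoidal if and only if it is balanced (Sturmian). -/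
theorem palindrome_trapezoidal_iff_balanced (w : Word) (hpal : w.reverse = w) :
    Trapezoidal w ↔ BalancedWord w := by
  constructor
  · intro htrap
    by_contra hnb
    obtain ⟨n, hn⟩ := PS.notbal_key w hpal hnb
    have := htrap n
    omega
  · intro hbal
    exact PS.trapezoidal_of_balanced w hbal
end

section
/- Every rich palindrome is a closed word. -/
open List

/-- The number of occurrences of `u` as a factor of `w` (counted by starting position). -/
noncomputable def occG {α : Type*} (u w : List α) : ℕ :=
  {i : ℕ | i + u.length ≤ w.length ∧ (w.drop i).take u.length = u}.ncard

/-- A word is closed if it is empty or has a factor, different from the word itself,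
occurring exactly twice, as a prefix and as a suffix. -/
def ClosedWordG {α : Type*} (w : List α) : Prop :=
  w = [] ∨ ∃ u : List α, u ≠ w ∧ u <+: w ∧ u <:+ w ∧ occG u w = 2

/-- A word is rich if it has exactly `|w| + 1` distinct palindromic factors. -/
def RichG {α : Type*} (w : List α) : Prop :=
  {u : List α | u <:+: w ∧ u.reverse = u}.ncard = w.length + 1

section Aux

variable {α : Type*}

/-- prefix determines take -/
lemma takeOfPrefix {w p : List α} (h : p <+: w) : w.take p.length = p :=
  (List.prefix_iff_eq_take.mp h).symm

/-- shifting an occurrence: if `p` ends at `k` and `q` is a prefix of `p`, then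
`q` ends at `k - |p| + |q|`. -/
lemma suffix_take_shift {w p q : List α} {k : ℕ} (hk : k ≤ w.length)
    (hp : p <:+ w.take k) (hq : q <+: p) : q <:+ w.take (k - p.length + q.length) := by
  obtain ⟨s, hs⟩ := hp
  obtain ⟨t, ht⟩ := hq
  have hlen : s.length + p.length = k := by
    have h1 := congrArg List.length hs
    simp [List.length_take] at h1
    omega
  have h2 : (s ++ q) <+: w.take k := by
    refine ⟨t ++ [], ?_⟩
    rw [← hs, ← ht]
    simp [List.append_assoc]
  have h1 : (s ++ q) <+: w := h2.trans (List.take_prefix _ _)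
  have h3 : w.take (s.length + q.length) = s ++ q := by
    have := takeOfPrefix h1
    simpa using this
  have h4 : k - p.length + q.length = s.length + q.length := by omega
  rw [h4, h3]
  exact ⟨s, rfl⟩

lemma exists_end {w p : List α} (h : p <:+: w) : ∃ k, k ≤ w.length ∧ p <:+ w.take k := by
  obtain ⟨s, t, hst⟩ := h
  have hpre : (s ++ p) <+: w := ⟨t, by rw [← hst]⟩
  refine ⟨s.length + p.length, ?_, ?_⟩
  · have := hpre.length_le
    simpa using this
  · have h3 : w.take (s.length + p.length) = s ++ p := by
      have := takeOfPrefix hpre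
      simpa using this
    rw [h3]
    exact ⟨s, rfl⟩

lemma end_to_infix {w p : List α} {k : ℕ} (h : p <:+ w.take k) : p <:+: w :=
  h.isInfix.trans (List.take_prefix k w).isInfix

/-- a palindromic suffix of a palindrome is a prefix -/
lemma pal_suffix_prefix {w p : List α} (hw : w.reverse = w) (hp : p.reverse = p)
    (h : p <:+ w) : p <+: w := by
  have := List.reverse_prefix.mpr h
  rwa [hw, hp] at this

lemma pal_prefix_suffix {w p : List α} (hw : w.reverse = w) (hp : p.reverse = p)
    (h : p <+: w) : p <:+ w := by
  have := List.reverse_suffix.mpr h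
  rwa [hw, hp] at this

lemma factors_finite (w : List α) : {u : List α | u <:+: w ∧ u.reverse = u}.Finite := by
  apply Set.Finite.subset (w.tails.flatMap List.inits).finite_toSet
  rintro u ⟨hu, -⟩
  simp only [Set.mem_setOf_eq, List.mem_flatMap, List.mem_tails, List.mem_inits]
  obtain ⟨t, h1, h2⟩ := List.infix_iff_prefix_suffix.mp hu
  exact ⟨t, h2, h1⟩

/-- Key consequence of richness: for every `1 ≤ k ≤ |w|` there is a nonempty palindromic
factor whose first occurrence ends exactly at `k`. -/
lemma rich_exists_uni {w : List α} (hrich : RichG w) {k : ℕ} (hk1 : 1 ≤ k)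
    (hk2 : k ≤ w.length) :
    ∃ p : List α, p ≠ [] ∧ p.reverse = p ∧ p <:+ w.take k ∧ ∀ j, j < k → ¬ p <:+ w.take j := by
  classical
  set S : Set (List α) := {u : List α | u <:+: w ∧ u.reverse = u} with hS
  have hSfin : S.Finite := factors_finite w
  have hScard : S.ncard = w.length + 1 := hrich
  have hnil : ([] : List α) ∈ S := ⟨⟨[], w, rfl⟩, rfl⟩
  set T : Set (List α) := S \ {([] : List α)} with hT
  have hTfin : T.Finite := hSfin.subset Set.diff_subset
  have hTcard : T.ncard = w.length := by
    rw [hT, Set.ncard_diff_singleton_of_mem hnil, hScard]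
    omega
  set m : List α → ℕ := fun p => sInf {j | p <:+ w.take j} with hm
  have hmem : ∀ p ∈ T, (p <:+ w.take (m p) ∧ m p ≤ w.length) ∧
      ∀ j, j < m p → ¬ p <:+ w.take j := by
    intro p hp
    obtain ⟨j, hj1, hj2⟩ := exists_end hp.1.1
    have hne : {j | p <:+ w.take j}.Nonempty := ⟨j, hj2⟩
    refine ⟨⟨Nat.sInf_mem hne, le_trans (Nat.sInf_le hj2) hj1⟩, fun j' hj' => ?_⟩
    exact Nat.notMem_of_lt_sInf hj'
  have hrange : ∀ p ∈ T, m p ∈ Set.Icc 1 w.length := by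
    intro p hp
    obtain ⟨⟨h1, h2⟩, -⟩ := hmem p hp
    have hlp : 1 ≤ p.length := by
      have : p ≠ [] := hp.2
      cases p with
      | nil => simp at this
      | cons a l => simp
    have : p.length ≤ m p := by
      have := h1.length_le
      simp [List.length_take] at this
      omega
    exact ⟨le_trans hlp this, h2⟩
  have hinj : Set.InjOn m T := by
    intro p hp q hq hpq
    by_contra hne
    obtain ⟨⟨hp1, hp2⟩, hp3⟩ := hmem p hp
    obtain ⟨⟨hq1, hq2⟩, hq3⟩ := hmem q hq
    rw [← hpq] at hq1
    -- p, q both suffixes of w.take (m p)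
    have hcomp := List.suffix_or_suffix_of_suffix hp1 hq1
    rcases lt_trichotomy p.length q.length with hlt | heq | hgt
    · -- p proper suffix of q, p palindrome ⟹ p prefix of q, so p ends earlier
      have hpq' : p <:+ q := by
        rcases hcomp with h | h
        · exact h
        · exact absurd h.length_le (by omega)
      have hppre : p <+: q := pal_suffix_prefix hq.1.2 hp.1.2 hpq'
      have hql : q.length ≤ m p := by
        have := hq1.length_le
        simp [List.length_take] at this
        omega
      have := suffix_take_shift hp2 hq1 hppre
      exact hp3 _ (by omega) this
    · have : p = q := by
        rcases hcomp with h | h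
        · exact h.eq_of_length heq
        · exact (h.eq_of_length heq.symm).symm
      exact hne this
    · have hqp' : q <:+ p := by
        rcases hcomp with h | h
        · exact absurd h.length_le (by omega)
        · exact h
      have hqpre : q <+: p := pal_suffix_prefix hp.1.2 hq.1.2 hqp'
      have hpl : p.length ≤ m p := by
        have := hp1.length_le
        simp [List.length_take] at this
        omega
      have := suffix_take_shift hp2 hp1 hqpre
      rw [← hpq] at hq3
      exact hq3 _ (by omega) this
  -- image of T under m is all of Icc 1 |w|
  have himg : m '' T = Set.Icc 1 w.length := by
    apply Set.eq_of_subset_of_ncard_le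
    · rintro x ⟨p, hp, rfl⟩
      exact hrange p hp
    · have h1 : (m '' T).ncard = T.ncard := Set.ncard_image_of_injOn hinj
      have h2 : (Set.Icc 1 w.length).ncard = w.length := by
        rw [← Finset.coe_Icc, Set.ncard_coe_finset, Nat.card_Icc]
        omega
      omega
    · exact Set.finite_Icc 1 w.length
  have hkmem : k ∈ m '' T := by
    rw [himg]; exact ⟨hk1, hk2⟩
  obtain ⟨p, hp, hpk⟩ := hkmem
  obtain ⟨⟨h1, -⟩, h3⟩ := hmem p hp
  rw [hpk] at h1 h3
  exact ⟨p, hp.2, hp.1.2, h1, h3⟩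

end Aux

/-- Every rich palindrome is a closed word. -/
theorem rich_palindrome_closed {α : Type*} (w : List α)
    (hpal : w.reverse = w) (hrich : RichG w) : ClosedWordG w := by
  classical
  rcases eq_or_ne w [] with h | hwne
  · exact Or.inl h
  right
  have hwlen : 1 ≤ w.length := by
    cases w with
    | nil => simp at hwne
    | cons a l => simp
  -- the list of proper palindromic suffixes of w
  set L : List (List α) :=
    w.tails.filter (fun u => decide (u.reverse = u) && decide (u.length < w.length)) with hL
  have hmemL : ∀ v : List α, v ∈ L ↔ v <:+ w ∧ v.reverse = v ∧ v.length < w.length := by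
    intro v
    simp [hL, List.mem_filter, List.mem_tails, and_assoc]
  have hLne : L ≠ [] := by
    intro h
    have : ([] : List α) ∈ L := (hmemL []).mpr ⟨⟨w, by simp⟩, rfl, by simp; omega⟩
    rw [h] at this
    simp at this
  obtain ⟨u, hu⟩ : ∃ u, u ∈ L.argmax List.length := by
    cases h : L.argmax List.length with
    | none => exact absurd (List.argmax_eq_none.mp h) hLne
    | some u => exact ⟨u, rfl⟩
  obtain ⟨husuf, hupal, hult⟩ := (hmemL u).mp (List.argmax_mem hu)
  have humax : ∀ v ∈ L, v.length ≤ u.length := fun v hv => List.le_of_mem_argmax hv hu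
  have hupre : u <+: w := pal_suffix_prefix hpal hupal husuf
  -- no internal occurrence of u
  have hnoint : ¬ ∃ k, u.length < k ∧ k < w.length ∧ u <:+ w.take k := by
    rintro ⟨k0, hk01, hk02, hk03⟩
    set E : Set ℕ := {k | u.length < k ∧ k < w.length ∧ u <:+ w.take k} with hE
    have hEne : E.Nonempty := ⟨k0, hk01, hk02, hk03⟩
    set k : ℕ := sInf E with hk
    obtain ⟨hk1, hk2, hk3⟩ : u.length < k ∧ k < w.length ∧ u <:+ w.take k := Nat.sInf_mem hEne
    obtain ⟨p, hpne, hppal, hpk, hpmin⟩ :=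
      rich_exists_uni hrich (k := k) (by omega) (by omega)
    have hplen : p.length ≤ k := by
      have := hpk.length_le
      simp [List.length_take] at this
      omega
    rcases lt_trichotomy p.length u.length with hlt | heq | hgt
    · -- p proper suffix of u, shift: p ends earlier, contradicting minimality of m p
      have hps : p <:+ u := by
        rcases List.suffix_or_suffix_of_suffix hpk hk3 with h | h
        · exact h
        · exact absurd h.length_le (by omega)
      have hppre : p <+: u := pal_suffix_prefix hupal hppal hps
      have := suffix_take_shift (w := w) (by omega) hk3 hppre
      exact hpmin _ (by omega) this
    · -- p = u, but u ends at |u| < k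
      have hpu : p = u := by
        rcases List.suffix_or_suffix_of_suffix hpk hk3 with h | h
        · exact h.eq_of_length heq
        · exact (h.eq_of_length heq.symm).symm
      have hu0 : u <:+ w.take u.length := by
        rw [takeOfPrefix hupre]
      exact hpmin u.length (by omega) (hpu ▸ hu0)
    · -- u proper suffix of p
      have hus : u <:+ p := by
        rcases List.suffix_or_suffix_of_suffix hpk hk3 with h | h
        · exact absurd h.length_le (by omega)
        · exact h
      have hupre' : u <+: p := pal_suffix_prefix hppal hupal hus
      have hshift := suffix_take_shift (w := w) (by omega) hpk hupre'
      set j : ℕ := k - p.length + u.length with hj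
      have hjk : j < k := by omega
      have hjE : j ∉ E := Nat.notMem_of_lt_sInf (by omega)
      have hjge : u.length ≤ j := by omega
      have hjeq : j = u.length := by
        by_contra hne
        exact hjE ⟨by omega, by omega, hshift⟩
      have hpk' : p.length = k := by omega
      -- p = w.take k, a palindromic proper prefix, hence a longer palindromic proper suffix
      have hpeq : p = w.take k := by
        apply hpk.eq_of_length
        simp [List.length_take]
        omega
      have htpal : (w.take k).reverse = w.take k := hpeq ▸ hppal
      have htsuf : (w.take k) <:+ w := pal_prefix_suffix hpal htpal (List.take_prefix k w)
      have : (w.take k) ∈ L := (hmemL _).mpr ⟨htsuf, htpal, by simp [List.length_take]; omega⟩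
      have := humax _ this
      simp [List.length_take] at this
      omega
  -- the occurrence set of u is exactly {0, |w| - |u|}
  refine ⟨u, ?_, hupre, husuf, ?_⟩
  · intro h
    rw [h] at hult
    omega
  · have hset : {i : ℕ | i + u.length ≤ w.length ∧ (w.drop i).take u.length = u} =
        {0, w.length - u.length} := by
      ext i
      simp only [Set.mem_setOf_eq, Set.mem_insert_iff, Set.mem_singleton_iff]
      constructor
      · rintro ⟨h1, h2⟩
        by_contra hcon
        push_neg at hcon
        obtain ⟨hi0, hi1⟩ := hcon
        have hsuf : u <:+ w.take (i + u.length) := by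
          rw [List.take_add]
          exact ⟨w.take i, by rw [h2]⟩
        exact hnoint ⟨i + u.length, by omega, by omega, hsuf⟩
      · rintro (rfl | rfl)
        · refine ⟨by omega, ?_⟩
          simp only [List.drop_zero]
          exact takeOfPrefix hupre
        · obtain ⟨s, hs⟩ := husuf
          have hsl : s.length = w.length - u.length := by
            have := congrArg List.length hs
            simp at this
            omega
          refine ⟨by omega, ?_⟩
          rw [show w.length - u.length = s.length by omega, ← hs, List.drop_left]
          simp
    rw [occG, hset]
    exact Set.ncard_pair (by omega)
end
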